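/- arXiv:1704.00937 — 6 statements merged into one kernel-verified Lean document; each statement's English description precedes it below -/
import Mathlib

section
/- Let D be a digraph on vertex set {1,…,n}. Then the semigroup ⟨D⟩ is H-trivial if and only if the underlying graph of every strong component of D is a path graph. -/
/-- The transformation of `{1,…,n}` sending `a` to `b` and fixing all other points. -/
def arcT {n : ℕ} (a b : Fin n) : Fin n → Fin n := fun v => if v = a then b else v

/-- The semigroup `⟨D⟩` generated by the arcs of the digraph `D`; transformations act on
the right, so a product `ε₁ε₂⋯ε_k` is the function `ε_k ∘ ⋯ ∘ ε₁`. -/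
def genSg {n : ℕ} (D : Set (Fin n × Fin n)) : Set (Fin n → Fin n) :=
  { α | ∃ l : List (Fin n × Fin n), l ≠ [] ∧ (∀ p ∈ l, p ∈ D) ∧
      α = l.foldl (fun f p => arcT p.1 p.2 ∘ f) id }

/-- The product `x·y` in the right-action convention: apply `x` first, then `y`. -/
def sgMul {n : ℕ} (x y : Fin n → Fin n) : Fin n → Fin n := y ∘ x

/-- The right ideal `xS¹ = {x} ∪ xS`. -/
def rIdeal {n : ℕ} (S : Set (Fin n → Fin n)) (x : Fin n → Fin n) : Set (Fin n → Fin n) :=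
  insert x { y | ∃ s ∈ S, y = sgMul x s }

/-- The left ideal `S¹x = {x} ∪ Sx`. -/
def lIdeal {n : ℕ} (S : Set (Fin n → Fin n)) (x : Fin n → Fin n) : Set (Fin n → Fin n) :=
  insert x { y | ∃ s ∈ S, y = sgMul s x }

/-- The two-sided ideal `S¹xS¹`. -/
def jIdeal {n : ℕ} (S : Set (Fin n → Fin n)) (x : Fin n → Fin n) : Set (Fin n → Fin n) :=
  { y | ∃ s ∈ insert id S, ∃ t ∈ insert id S, y = sgMul s (sgMul x t) }

def RRel {n : ℕ} (S : Set (Fin n → Fin n)) (x y : Fin n → Fin n) : Prop :=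
  rIdeal S x = rIdeal S y

def LRel {n : ℕ} (S : Set (Fin n → Fin n)) (x y : Fin n → Fin n) : Prop :=
  lIdeal S x = lIdeal S y

def JRel {n : ℕ} (S : Set (Fin n → Fin n)) (x y : Fin n → Fin n) : Prop :=
  jIdeal S x = jIdeal S y

def RTrivial {n : ℕ} (S : Set (Fin n → Fin n)) : Prop :=
  ∀ x ∈ S, ∀ y ∈ S, RRel S x y → x = y

def LTrivial {n : ℕ} (S : Set (Fin n → Fin n)) : Prop :=
  ∀ x ∈ S, ∀ y ∈ S, LRel S x y → x = y

def HTrivial {n : ℕ} (S : Set (Fin n → Fin n)) : Prop :=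
  ∀ x ∈ S, ∀ y ∈ S, RRel S x y → LRel S x y → x = y

def JTrivial {n : ℕ} (S : Set (Fin n → Fin n)) : Prop :=
  ∀ x ∈ S, ∀ y ∈ S, JRel S x y → x = y

/-- `α` has a cycle of length `k`: `k` distinct points `a₀,…,a_{k-1}` with
`α(aᵢ) = a_{i+1 mod k}`. -/
def IsCycleOf {n : ℕ} (α : Fin n → Fin n) (k : ℕ) : Prop :=
  0 < k ∧ ∃ a : ZMod k → Fin n, Function.Injective a ∧ ∀ i, α (a i) = a (i + 1)

/-- `l(D)`: the maximal length of a cycle of an element of `⟨D⟩`. -/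
noncomputable def lD {n : ℕ} (D : Set (Fin n × Fin n)) : ℕ :=
  sSup { k | ∃ α ∈ genSg D, IsCycleOf α k }

/-- The arc set of a graph. -/
def arcsOf {n : ℕ} (G : SimpleGraph (Fin n)) : Set (Fin n × Fin n) :=
  { p | G.Adj p.1 p.2 }

/-- `l(G)` for a graph `G`. -/
noncomputable def lG {n : ℕ} (G : SimpleGraph (Fin n)) : ℕ := lD (arcsOf G)

/-- Reachability along directed walks of `D`. -/
def dreach {n : ℕ} (D : Set (Fin n × Fin n)) : Fin n → Fin n → Prop :=
  Relation.ReflTransGen (fun a b => (a, b) ∈ D)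

/-- The strong component of the vertex `v`. -/
def strongComp {n : ℕ} (D : Set (Fin n × Fin n)) (v : Fin n) : Set (Fin n) :=
  { u | dreach D u v ∧ dreach D v u }

/-- The underlying graph of the digraph `D`. -/
def underlying {n : ℕ} (D : Set (Fin n × Fin n)) : SimpleGraph (Fin n) where
  Adj a b := a ≠ b ∧ ((a, b) ∈ D ∨ (b, a) ∈ D)
  symm := ⟨fun a b h => ⟨h.1.symm, h.2.symm⟩⟩
  loopless := ⟨fun a h => h.1 rfl⟩

/-- `v 0, v 1, …, v r` is a cycle of the digraph `D`. -/
def IsDCycle {n : ℕ} (D : Set (Fin n × Fin n)) (r : ℕ) (v : ℕ → Fin n) : Prop :=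
  1 ≤ r ∧ v r = v 0 ∧ (∀ i < r, ∀ j < r, v i = v j → i = j) ∧
    ∀ i < r, (v i, v (i + 1)) ∈ D

def HasDCycle {n : ℕ} (D : Set (Fin n × Fin n)) : Prop := ∃ r v, IsDCycle D r v

def DAcyclic {n : ℕ} (D : Set (Fin n × Fin n)) : Prop := ¬ HasDCycle D

/-- `G` is a subgroup contained in the transformation semigroup `S`. -/
def IsSubgroupIn {n : ℕ} (S G : Set (Fin n → Fin n)) : Prop :=
  G ⊆ S ∧ (∀ x ∈ G, ∀ y ∈ G, sgMul x y ∈ G) ∧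
    ∃ e ∈ G, (∀ x ∈ G, sgMul e x = x ∧ sgMul x e = x) ∧
      ∀ x ∈ G, ∃ y ∈ G, sgMul x y = e ∧ sgMul y x = e

/-- Every subgroup of `S` is trivial. -/
def SgAperiodic {n : ℕ} (S : Set (Fin n → Fin n)) : Prop :=
  ∀ G, IsSubgroupIn S G → G.Subsingleton

namespace Stmt0
variable {n : ℕ} {D : Set (Fin n × Fin n)}

def applyW (l : List (Fin n × Fin n)) : Fin n → Fin n :=
  l.foldl (fun f p => arcT p.1 p.2 ∘ f) id

theorem applyW_from (l : List (Fin n × Fin n)) (g : Fin n → Fin n) :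
    l.foldl (fun f p => arcT p.1 p.2 ∘ f) g = applyW l ∘ g := by
  induction l generalizing g with
  | nil => rfl
  | cons e l ih =>
      show l.foldl _ (arcT e.1 e.2 ∘ g) = applyW (e :: l) ∘ g
      rw [ih]
      show applyW l ∘ (arcT e.1 e.2 ∘ g) = applyW (e :: l) ∘ g
      have : applyW (e :: l) = applyW l ∘ arcT e.1 e.2 := by
        show l.foldl _ (arcT e.1 e.2 ∘ id) = _
        rw [ih]; rfl
      rw [this]; rfl

theorem applyW_cons (e : Fin n × Fin n) (l : List (Fin n × Fin n)) :
    applyW (e :: l) = applyW l ∘ arcT e.1 e.2 := by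
  show l.foldl _ (arcT e.1 e.2 ∘ id) = _
  rw [applyW_from]; rfl

theorem applyW_append (l₁ l₂ : List (Fin n × Fin n)) :
    applyW (l₁ ++ l₂) = applyW l₂ ∘ applyW l₁ := by
  show List.foldl _ id (l₁ ++ l₂) = _
  rw [List.foldl_append, applyW_from]; rfl

theorem mem_genSg_iff {α : Fin n → Fin n} :
    α ∈ genSg D ↔ ∃ l : List (Fin n × Fin n), l ≠ [] ∧ (∀ p ∈ l, p ∈ D) ∧ α = applyW l :=
  Iff.rfl

theorem sgMul_mem {x y : Fin n → Fin n} (hx : x ∈ genSg D) (hy : y ∈ genSg D) :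
    sgMul x y ∈ genSg D := by
  obtain ⟨l₁, h1, h2, rfl⟩ := hx
  obtain ⟨l₂, h3, h4, rfl⟩ := hy
  refine ⟨l₁ ++ l₂, by simp [h1], ?_, ?_⟩
  · intro p hp; rcases List.mem_append.1 hp with h | h; exacts [h2 p h, h4 p h]
  · show _ = applyW (l₁ ++ l₂)
    rw [applyW_append]; rfl

end Stmt0
section Chunk2
namespace Stmt0
variable {n : ℕ} {D : Set (Fin n × Fin n)}

/-- Steps of `D` staying inside `A`. -/
def AvoidR (D : Set (Fin n × Fin n)) (A : Set (Fin n)) : Fin n → Fin n → Prop :=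
  fun u w => (u, w) ∈ D ∧ u ∈ A ∧ w ∈ A

theorem arcT_self (a b : Fin n) : arcT a b a = b := if_pos rfl

theorem arcT_ne {a b v : Fin n} (h : v ≠ a) : arcT a b v = v := if_neg h

theorem moveWord {A : Set (Fin n)} {p q : Fin n}
    (h : Relation.ReflTransGen (AvoidR D A) p q) :
    ∃ l : List (Fin n × Fin n), (∀ e ∈ l, e ∈ D) ∧ applyW l p = q ∧
      ∀ z ∉ A, applyW l z = z := by
  induction h with
  | refl => exact ⟨[], by simp, rfl, fun z _ => rfl⟩
  | @tail b c _ hstep ih =>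
      obtain ⟨l, h1, h2, h3⟩ := ih
      refine ⟨l ++ [(b, c)], ?_, ?_, ?_⟩
      · intro e he
        rcases List.mem_append.1 he with h | h
        · exact h1 e h
        · simp at h; subst h; exact hstep.1
      · rw [applyW_append, Function.comp_apply, h2]
        show arcT b c (id b) = c
        simpa using arcT_self b c
      · intro z hz
        rw [applyW_append, Function.comp_apply, h3 z hz]
        show arcT b c (id z) = z
        have : z ≠ b := fun h => hz (h ▸ hstep.2.1)
        simpa using arcT_ne this

theorem swap_of_walks {a b c : Fin n} (hab : a ≠ b) (hac : a ≠ c) (hbc : b ≠ c)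
    (hP : Relation.ReflTransGen (AvoidR D {x | x ≠ b}) a c)
    (hQ : Relation.ReflTransGen (AvoidR D {x | x ≠ c}) b a)
    (hR : Relation.ReflTransGen (AvoidR D {x | x ≠ a}) c b) :
    ∃ α ∈ genSg D, α a = b ∧ α b = a := by
  obtain ⟨lP, hP1, hP2, hP3⟩ := moveWord hP
  obtain ⟨lQ, hQ1, hQ2, hQ3⟩ := moveWord hQ
  obtain ⟨lR, hR1, hR2, hR3⟩ := moveWord hR
  have hPne : lP ≠ [] := by
    rintro rfl; exact hac hP2
  refine ⟨applyW (lP ++ lQ ++ lR), ?_, ?_, ?_⟩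
  · refine mem_genSg_iff.2 ⟨lP ++ lQ ++ lR, by simp [hPne], ?_, rfl⟩
    intro e he
    rcases List.mem_append.1 he with h | h
    · rcases List.mem_append.1 h with h | h
      exacts [hP1 e h, hQ1 e h]
    · exact hR1 e h
  · rw [applyW_append, applyW_append, Function.comp_apply, Function.comp_apply, hP2]
    rw [hQ3 c (by simp), hR2]
  · rw [applyW_append, applyW_append, Function.comp_apply, Function.comp_apply]
    rw [hP3 b (by simp), hQ2, hR3 a (by simp)]

theorem rtg_of_seq {A : Set (Fin n)} (v : ℕ → Fin n) (s t : ℕ) (hst : s ≤ t)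
    (harc : ∀ i, s ≤ i → i < t → (v i, v (i + 1)) ∈ D)
    (hA : ∀ i, s ≤ i → i ≤ t → v i ∈ A) :
    Relation.ReflTransGen (AvoidR D A) (v s) (v t) := by
  induction t, hst using Nat.le_induction with
  | base => exact Relation.ReflTransGen.refl
  | succ t ht ih =>
      refine Relation.ReflTransGen.tail (ih ?_ ?_) ?_
      · intro i h1 h2; exact harc i h1 (h2.trans (Nat.lt_succ_self t))
      · intro i h1 h2; exact hA i h1 (h2.trans (Nat.le_succ t))
      · exact ⟨harc t ht (Nat.lt_succ_self t), hA t ht (Nat.le_succ t),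
          hA (t + 1) (ht.trans (Nat.le_succ t)) le_rfl⟩

/-- A swap from a simple directed cycle of length `≥ 3`. -/
theorem dswap_of_dcycle {r : ℕ} (hr : 3 ≤ r) (v : ℕ → Fin n)
    (hinj : ∀ i < r, ∀ j < r, v i = v j → i = j) (hclose : v r = v 0)
    (harc : ∀ i < r, (v i, v (i + 1)) ∈ D) :
    ∃ α ∈ genSg D, ∃ a b : Fin n, a ≠ b ∧ α a = b ∧ α b = a := by
  have h0 : (0:ℕ) < r := by omega
  have h1 : (1:ℕ) < r := by omega
  have h2 : (2:ℕ) < r := by omega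
  have hne : ∀ i < r, ∀ j < r, i ≠ j → v i ≠ v j := fun i hi j hj hij h =>
    hij (hinj i hi j hj h)
  obtain ⟨α, hα, h⟩ := swap_of_walks (D := D)
    (a := v 1) (b := v 0) (c := v 2)
    (hne 1 h1 0 h0 (by omega)) (hne 1 h1 2 h2 (by omega)) (hne 0 h0 2 h2 (by omega))
    (Relation.ReflTransGen.single
      ⟨harc 1 h1, hne 1 h1 0 h0 (by omega), hne 2 h2 0 h0 (by omega)⟩)
    (Relation.ReflTransGen.single
      ⟨harc 0 h0, hne 0 h0 2 h2 (by omega), hne 1 h1 2 h2 (by omega)⟩)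
    (by
      have := rtg_of_seq (D := D) (A := {x | x ≠ v 1}) v 2 r (by omega)
        (fun i hi hir => harc i hir)
        (fun i hi hir => by
          rcases eq_or_lt_of_le hir with rfl | hlt
          · show v i ≠ v 1
            rw [hclose]; exact hne 0 h0 1 h1 (by omega)
          · exact hne i hlt 1 h1 (by omega))
      rwa [hclose] at this)
  exact ⟨α, hα, v 1, v 0, hne 1 h1 0 h0 (by omega), h⟩

end Stmt0
end Chunk2
section Chunk3
namespace Stmt0
variable {n : ℕ} {D : Set (Fin n × Fin n)}

theorem sgMul_assoc (x y z : Fin n → Fin n) : sgMul (sgMul x y) z = sgMul x (sgMul y z) := rfl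

theorem rIdeal_eq_of_mutual {S : Set (Fin n → Fin n)}
    (hS : ∀ u ∈ S, ∀ v ∈ S, sgMul u v ∈ S) {x y s t : Fin n → Fin n}
    (hs : s ∈ S) (ht : t ∈ S) (hxy : y = sgMul x s) (hyx : x = sgMul y t) :
    rIdeal S x = rIdeal S y := by
  have key : ∀ a b u : Fin n → Fin n, u ∈ S → a = sgMul b u → rIdeal S a ⊆ rIdeal S b := by
    intro a b u hu hab z hz
    rcases hz with rfl | ⟨w, hw, rfl⟩
    · exact Or.inr ⟨u, hu, hab⟩
    · exact Or.inr ⟨sgMul u w, hS u hu w hw, by rw [hab, sgMul_assoc]⟩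
  exact le_antisymm (key x y t ht hyx) (key y x s hs hxy)

theorem lIdeal_eq_of_mutual {S : Set (Fin n → Fin n)}
    (hS : ∀ u ∈ S, ∀ v ∈ S, sgMul u v ∈ S) {x y s t : Fin n → Fin n}
    (hs : s ∈ S) (ht : t ∈ S) (hxy : y = sgMul s x) (hyx : x = sgMul t y) :
    lIdeal S x = lIdeal S y := by
  have key : ∀ a b u : Fin n → Fin n, u ∈ S → a = sgMul u b → lIdeal S a ⊆ lIdeal S b := by
    intro a b u hu hab z hz
    rcases hz with rfl | ⟨w, hw, rfl⟩
    · exact Or.inr ⟨u, hu, hab⟩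
    · exact Or.inr ⟨sgMul w u, hS w hw u hu, by rw [hab, ← sgMul_assoc]⟩
  exact le_antisymm (key x y t ht hyx) (key y x s hs hxy)

theorem iterate_mem {α : Fin n → Fin n} (hα : α ∈ genSg D) :
    ∀ k, 1 ≤ k → α^[k] ∈ genSg D := by
  intro k hk
  induction k with
  | zero => omega
  | succ k ih =>
      rcases Nat.eq_zero_or_pos k with rfl | hk1
      · simpa using hα
      · have : α^[k + 1] = sgMul α^[k] α := Function.iterate_succ' α k
        rw [this]
        exact sgMul_mem (ih hk1) hα

theorem swap_parity {α : Fin n → Fin n} {a b : Fin n} (h1 : α a = b) (h2 : α b = a) :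
    ∀ t, (α^[2 * t] a = a ∧ α^[2 * t + 1] a = b) := by
  intro t
  induction t with
  | zero => simpa using h1
  | succ t ih =>
      have e1 : 2 * (t + 1) = (2 * t + 1) + 1 := by ring
      constructor
      · rw [e1, Function.iterate_succ_apply', ih.2, h2]
      · rw [e1, show (2*t+1)+1+1 = ((2*t+1)+1)+1 from rfl, Function.iterate_succ_apply',
          Function.iterate_succ_apply', ih.2, h2, h1]

theorem noSwap_of_HTrivial (hH : HTrivial (genSg D)) :
    ¬ ∃ α ∈ genSg D, ∃ a b : Fin n, a ≠ b ∧ α a = b ∧ α b = a := by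
  rintro ⟨α, hα, a, b, hab, h1, h2⟩
  have hstep : ∀ q : ℕ, α^[q] ≠ α^[q + 1] := by
    intro q hq
    rcases Nat.even_or_odd q with ⟨t, ht⟩ | ⟨t, ht⟩
    · have e1 : α^[q] a = a := by
        rw [ht, show t + t = 2 * t by ring]; exact (swap_parity h1 h2 t).1
      have e2 : α^[q + 1] a = b := by
        rw [ht, show t + t + 1 = 2 * t + 1 by ring]; exact (swap_parity h1 h2 t).2
      rw [hq, e2] at e1; exact hab e1.symm
    · have e1 : α^[q] a = b := by rw [ht]; exact (swap_parity h1 h2 t).2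
      have e2 : α^[q + 1] a = a := by
        rw [ht, show 2 * t + 1 + 1 = 2 * (t + 1) by ring]
        exact (swap_parity h1 h2 (t + 1)).1
      rw [hq, e2] at e1; exact hab e1
  have haux : ∀ i j : ℕ, i < j → α^[i] = α^[j] →
      ∃ p d, 1 ≤ p ∧ 1 ≤ d ∧ α^[p] = α^[p + d] := by
    intro i j h hij
    refine ⟨i + 1, j - i, by omega, by omega, ?_⟩
    calc α^[i+1] = α^[i] ∘ α := Function.iterate_succ α i
      _ = α^[j] ∘ α := by rw [hij]
      _ = α^[j+1] := (Function.iterate_succ α j).symm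
      _ = α^[i+1+(j-i)] := by
            have e : i + 1 + (j - i) = j + 1 := by omega
            rw [e]
  obtain ⟨i, j, hne, hij⟩ := Finite.exists_ne_map_eq_of_infinite (fun k : ℕ => α^[k])
  have hkey : ∃ p d, 1 ≤ p ∧ 1 ≤ d ∧ α^[p] = α^[p + d] := by
    rcases Nat.lt_or_ge i j with h | h
    · exact haux i j h hij
    · exact haux j i (by omega) hij.symm
  obtain ⟨p, d, hp1, hd1, hper⟩ := hkey
  have hd2 : 2 ≤ d := by
    rcases Nat.lt_or_ge d 2 with h | h
    · have : d = 1 := by omega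
      subst this
      exact absurd hper (hstep p)
    · exact h
  have hxS : α^[p] ∈ genSg D := iterate_mem hα p hp1
  have hyS : α^[p + 1] ∈ genSg D := iterate_mem hα (p + 1) (by omega)
  have hxy : α^[p] ≠ α^[p + 1] := hstep p
  have hy_eq : α^[p + 1] = sgMul α^[p] α := Function.iterate_succ' α p
  have hy_eq' : α^[p + 1] = sgMul α α^[p] := Function.iterate_succ α p
  have hx_eq : α^[p] = sgMul α^[p + 1] α^[d - 1] := by
    show α^[p] = α^[d - 1] ∘ α^[p + 1]
    rw [← Function.iterate_add, hper]
    have e : d - 1 + (p + 1) = p + d := by omega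
    rw [e]
  have hx_eq' : α^[p] = sgMul α^[d - 1] α^[p + 1] := by
    show α^[p] = α^[p + 1] ∘ α^[d - 1]
    rw [← Function.iterate_add, hper]
    have e : p + 1 + (d - 1) = p + d := by omega
    rw [e]
  have hαd : α^[d - 1] ∈ genSg D := iterate_mem hα (d - 1) (by omega)
  have hR : RRel (genSg D) α^[p] α^[p + 1] :=
    rIdeal_eq_of_mutual (fun u hu v hv => sgMul_mem hu hv) hα hαd hy_eq hx_eq
  have hL : LRel (genSg D) α^[p] α^[p + 1] :=
    lIdeal_eq_of_mutual (fun u hu v hv => sgMul_mem hu hv) hα hαd hy_eq' hx_eq'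
  exact hxy (hH _ hxS _ hyS hR hL)

end Stmt0
end Chunk3
section Chunk4
namespace Stmt0
variable {n : ℕ} {D : Set (Fin n × Fin n)}

theorem traj_dreach {l : List (Fin n × Fin n)} (hl : ∀ e ∈ l, e ∈ D) (u : Fin n) :
    dreach D u (applyW l u) := by
  induction l generalizing u with
  | nil => exact Relation.ReflTransGen.refl
  | cons e t ih =>
      rw [applyW_cons]
      have h1 : dreach D u (arcT e.1 e.2 u) := by
        by_cases h : u = e.1
        · subst h; rw [arcT_self]
          exact Relation.ReflTransGen.single (hl e (by simp))
        · rw [arcT_ne h]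
          exact Relation.ReflTransGen.refl
      exact h1.trans (ih (fun e' he' => hl e' (by simp [he'])) _)

theorem walk_restrict {v u w : Fin n} (h : dreach D u w) :
    dreach D w v → dreach D v u →
    Relation.ReflTransGen (AvoidR D (strongComp D v)) u w := by
  induction h using Relation.ReflTransGen.head_induction_on with
  | refl => intro _ _; exact Relation.ReflTransGen.refl
  | head hab hbw ih =>
      intro hwv hva
      exact Relation.ReflTransGen.head
        ⟨hab, ⟨(Relation.ReflTransGen.head hab hbw).trans hwv, hva⟩,
          ⟨hbw.trans hwv, hva.tail hab⟩⟩ (ih hwv (hva.tail hab))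

inductive RWalk (r : Fin n → Fin n → Prop) : Fin n → Fin n → List (Fin n) → Prop
  | nil (u : Fin n) : RWalk r u u [u]
  | cons {u v w : Fin n} {l : List (Fin n)} :
      r u v → RWalk r v w l → RWalk r u w (u :: l)

theorem rwalk_of_rtg {r : Fin n → Fin n → Prop} {u w : Fin n}
    (h : Relation.ReflTransGen r u w) : ∃ l, RWalk r u w l := by
  induction h using Relation.ReflTransGen.head_induction_on with
  | refl => exact ⟨[w], RWalk.nil w⟩
  | head hab _ ih =>
      obtain ⟨l, hl⟩ := ih
      exact ⟨_, RWalk.cons hab hl⟩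

theorem rwalk_suffix_of_mem {r : Fin n → Fin n → Prop} {v w u : Fin n} {m : List (Fin n)}
    (h : RWalk r v w m) (hu : u ∈ m) : ∃ m', RWalk r u w m' ∧ m' <:+ m := by
  induction h with
  | nil =>
      rename_i x
      have hx : u = x := by simpa using hu
      subst hx
      exact ⟨[u], RWalk.nil u, List.suffix_refl _⟩
  | cons =>
      rename_i a b c l hab hwalk ih
      rcases List.mem_cons.1 hu with h | hu
      · subst h
        exact ⟨_ :: l, RWalk.cons hab hwalk, List.suffix_refl _⟩
      · obtain ⟨m', h1, h2⟩ := ih hu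
        exact ⟨m', h1, h2.trans (List.suffix_cons a l)⟩

theorem rwalk_nodup {r : Fin n → Fin n → Prop} {u w : Fin n} {l : List (Fin n)}
    (h : RWalk r u w l) : ∃ l', RWalk r u w l' ∧ l'.Nodup ∧ l' ⊆ l := by
  induction h with
  | nil x => exact ⟨[x], RWalk.nil x, by simp, by simp⟩
  | @cons a b c l hab hwalk ih =>
      obtain ⟨l', h1, h2, h3⟩ := ih
      by_cases hmem : a ∈ l'
      · obtain ⟨m', h4, h5⟩ := rwalk_suffix_of_mem h1 hmem
        exact ⟨m', h4, h2.sublist h5.sublist,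
          fun x hx => List.mem_cons_of_mem a (h3 (h5.subset hx))⟩
      · exact ⟨a :: l', RWalk.cons hab h1, List.nodup_cons.2 ⟨hmem, h2⟩,
          List.cons_subset_cons a h3⟩

theorem rwalk_length {r : Fin n → Fin n → Prop} {u w : Fin n} {l : List (Fin n)}
    (h : RWalk r u w l) : 1 ≤ l.length := by
  cases h <;> simp

theorem rwalk_getD_zero {r : Fin n → Fin n → Prop} {u w z : Fin n} {l : List (Fin n)}
    (h : RWalk r u w l) : l.getD 0 z = u := by
  cases h <;> rfl

theorem rwalk_getD_last {r : Fin n → Fin n → Prop} {u w z : Fin n} {l : List (Fin n)}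
    (h : RWalk r u w l) : l.getD (l.length - 1) z = w := by
  induction h with
  | nil x => rfl
  | @cons a b c l hab hwalk ih =>
      have h1 : 1 ≤ l.length := rwalk_length hwalk
      obtain ⟨k, hk⟩ : ∃ k, l.length = k + 1 := ⟨l.length - 1, by omega⟩
      have : (a :: l).length - 1 = k + 1 := by simp [hk]
      rw [this, List.getD_cons_succ, ← ih]
      congr 1; omega

theorem rwalk_getD_step {r : Fin n → Fin n → Prop} {u w z : Fin n} {l : List (Fin n)}
    (h : RWalk r u w l) : ∀ i, i + 1 < l.length →
      r (l.getD i z) (l.getD (i + 1) z) := by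
  induction h with
  | nil x => intro i hi; simp at hi
  | @cons a b c l hab hwalk ih =>
      intro i hi
      match i with
      | 0 =>
          rw [List.getD_cons_zero, List.getD_cons_succ, rwalk_getD_zero hwalk]
          exact hab
      | (j + 1) =>
          rw [List.getD_cons_succ, List.getD_cons_succ]
          exact ih j (by simpa using hi)

theorem bidirected (hNS : ¬ ∃ α ∈ genSg D, ∃ a b : Fin n, a ≠ b ∧ α a = b ∧ α b = a)
    (hloop : ∀ a : Fin n, (a, a) ∉ D) {v u w : Fin n}
    (hu : u ∈ strongComp D v) (hw : w ∈ strongComp D v) (harc : (u, w) ∈ D) :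
    (w, u) ∈ D := by
  have huw : u ≠ w := by rintro rfl; exact hloop u harc
  have hdwu : dreach D w u := hw.1.trans hu.2
  have hRTG : Relation.ReflTransGen (AvoidR D (strongComp D v)) w u :=
    walk_restrict hdwu hu.1 hw.2
  obtain ⟨l0, hl0⟩ := rwalk_of_rtg hRTG
  obtain ⟨l, hwk, hnd, -⟩ := rwalk_nodup hl0
  set L := l.length - 1 with hL
  have hlen : l.length = L + 1 := by
    have := rwalk_length hwk; omega
  have hz0 : l.getD 0 w = w := rwalk_getD_zero hwk
  have hzL : l.getD L w = u := by
    have := rwalk_getD_last (z := w) hwk; rwa [hlen] at this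
  have hL1 : 1 ≤ L := by
    rcases Nat.eq_zero_or_pos L with h0 | h0
    · exfalso; apply huw; rw [← hzL, h0, hz0]
    · exact h0
  rcases Nat.lt_or_ge L 2 with hL2 | hL2
  · -- L = 1 : the walk is a single arc (w, u)
    have hstep := rwalk_getD_step (z := w) hwk 0 (by omega)
    rw [hz0] at hstep
    have : l.getD 1 w = u := by
      have hLe : L = 1 := by omega
      rw [← hzL, hLe]
    rw [this] at hstep
    exact hstep.1
  · -- L ≥ 2 : we get a directed cycle of length L + 1 ≥ 3, contradiction
    exfalso
    apply hNS
    set cyc : ℕ → Fin n := fun i => if i = 0 then l.getD L w else l.getD (i - 1) w with hcyc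
    have hcyc0 : cyc 0 = l.getD L w := if_pos rfl
    have hcycS : ∀ i, i ≠ 0 → cyc i = l.getD (i - 1) w := fun i hi => if_neg hi
    have hget_inj : ∀ i ≤ L, ∀ j ≤ L, l.getD i w = l.getD j w → i = j := by
      intro i hi j hj hij
      have hi' : i < l.length := by omega
      have hj' : j < l.length := by omega
      rw [List.getD_eq_getElem l w hi', List.getD_eq_getElem l w hj'] at hij
      exact (List.Nodup.getElem_inj_iff hnd).1 hij
    refine dswap_of_dcycle (r := L + 1) (by omega) cyc ?_ ?_ ?_
    · intro i hi j hj hij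
      rcases Nat.eq_zero_or_pos i with rfl | hi0 <;> rcases Nat.eq_zero_or_pos j with rfl | hj0
      · rfl
      · rw [hcyc0, hcycS j (by omega)] at hij
        have := hget_inj L le_rfl (j - 1) (by omega) hij
        omega
      · rw [hcycS i (by omega), hcyc0] at hij
        have := hget_inj (i - 1) (by omega) L le_rfl hij
        omega
      · rw [hcycS i (by omega), hcycS j (by omega)] at hij
        have := hget_inj (i - 1) (by omega) (j - 1) (by omega) hij
        omega
    · rw [hcycS (L + 1) (by omega), hcyc0]
      simp
    · intro i hi
      rcases Nat.eq_zero_or_pos i with rfl | hi0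
      · rw [hcyc0, hcycS 1 (by omega)]
        show (l.getD L w, l.getD 0 w) ∈ D
        rw [hzL, hz0]
        exact harc
      · rw [hcycS i (by omega), hcycS (i + 1) (by omega)]
        have hstep := rwalk_getD_step (z := w) hwk (i - 1) (by omega)
        have e : i - 1 + 1 = i := by omega
        rw [e] at hstep
        exact hstep.1

end Stmt0
end Chunk4
section Chunk5
namespace Stmt0
variable {n : ℕ}

theorem rtg_reverse {A : Fin n → Fin n → Prop} (hs : ∀ {u w}, A u w → A w u)
    {a b : Fin n} (h : Relation.ReflTransGen A a b) : Relation.ReflTransGen A b a := by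
  induction h with
  | refl => exact Relation.ReflTransGen.refl
  | tail _ h2 ih => exact Relation.ReflTransGen.head (hs h2) ih

theorem no_repeat_aux {A : Fin n → Fin n → Prop}
    (hirr : ∀ {u w}, A u w → u ≠ w)
    (hnocyc : ∀ r, 3 ≤ r → ∀ c : ℕ → Fin n,
      (∀ i < r, ∀ j < r, c i = c j → i = j) → c r = c 0 →
      (∀ i < r, A (c i) (c (i+1))) → False)
    (f : ℕ → Fin n) (L : ℕ)
    (hadj : ∀ i, i < L → A (f i) (f (i+1)))
    (hnb : ∀ i, i + 2 ≤ L → f (i+2) ≠ f i) :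
    ∀ i, i ≤ L → ∀ j, j ≤ L → f i = f j → i = j := by
  by_contra hcon
  push_neg at hcon
  obtain ⟨i, hiL, j, hjL, hfij, hij⟩ := hcon
  have hex : ∃ j', ∃ i', i' < j' ∧ j' ≤ L ∧ f i' = f j' := by
    rcases Nat.lt_or_ge i j with h | h
    · exact ⟨j, i, h, hjL, hfij⟩
    · exact ⟨i, j, by omega, hiL, hfij.symm⟩
  classical
  obtain ⟨i₀, hi₀, hj₀L, heq⟩ := Nat.find_spec hex
  have hmin : ∀ j' < Nat.find hex, ¬ (∃ i', i' < j' ∧ j' ≤ L ∧ f i' = f j') :=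
    fun j' h => Nat.find_min hex h
  have hr3 : 3 ≤ Nat.find hex - i₀ := by
    rcases Nat.lt_or_ge (Nat.find hex - i₀) 3 with h | h
    · exfalso
      have h1 : Nat.find hex - i₀ ≠ 1 := by
        intro h1
        have : Nat.find hex = i₀ + 1 := by omega
        rw [this] at heq
        exact hirr (hadj i₀ (by omega)) heq
      have h2 : Nat.find hex - i₀ ≠ 2 := by
        intro h2
        have : Nat.find hex = i₀ + 2 := by omega
        rw [this] at heq
        exact hnb i₀ (by omega) heq.symm
      omega
    · exact h
  refine hnocyc (Nat.find hex - i₀) hr3 (fun t => f (i₀ + t)) ?_ ?_ ?_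
  · intro a ha b hb hab
    by_contra hne
    rcases Nat.lt_or_ge a b with h | h
    · exact hmin (i₀ + b) (by omega) ⟨i₀ + a, by omega, by omega, hab⟩
    · exact hmin (i₀ + a) (by omega) ⟨i₀ + b, by omega, by omega, hab.symm⟩
  · show f (i₀ + (Nat.find hex - i₀)) = f (i₀ + 0)
    have e1 : i₀ + (Nat.find hex - i₀) = Nat.find hex := by omega
    have e2 : i₀ + 0 = i₀ := by omega
    rw [e1, e2]
    exact heq.symm
  · intro t ht
    have e1 : i₀ + t + 1 = i₀ + (t + 1) := by omega
    have := hadj (i₀ + t) (by omega)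
    rwa [e1] at this

theorem greedy_walk (A : Fin n → Fin n → Prop)
    (hirr : ∀ {u w}, A u w → u ≠ w) (s : Fin n) :
    ∃ f : ℕ → Fin n, f 0 = s ∧
      (∀ i, f (i+1) ≠ f i → A (f i) (f (i+1))) ∧
      (∀ i, f (i+2) ≠ f (i+1) → f (i+2) ≠ f i) ∧
      (∀ i, f (i+1) = f i → ∀ x, A (f i) x → i ≠ 0 ∧ x = f (i-1)) := by
  classical
  let nxt : Fin n → Fin n → Fin n := fun prev cur =>
    if h : ∃ x, A cur x ∧ x ≠ prev then h.choose else cur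
  have hnxtT : ∀ prev cur (h : ∃ x, A cur x ∧ x ≠ prev),
      A cur (nxt prev cur) ∧ nxt prev cur ≠ prev := by
    intro prev cur h
    show A cur (dite _ _ _) ∧ (dite _ _ _) ≠ prev
    rw [dif_pos h]
    exact h.choose_spec
  have hnxtF : ∀ prev cur, ¬ (∃ x, A cur x ∧ x ≠ prev) → nxt prev cur = cur := by
    intro prev cur h
    show (dite _ _ _) = cur
    rw [dif_neg h]
  have hnxt' : ∀ prev cur, nxt prev cur ≠ cur →
      A cur (nxt prev cur) ∧ nxt prev cur ≠ prev := by
    intro prev cur hne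
    by_cases h : ∃ x, A cur x ∧ x ≠ prev
    · exact hnxtT prev cur h
    · exact absurd (hnxtF prev cur h) hne
  let g : ℕ → Fin n × Fin n := fun i =>
    Nat.rec (s, nxt s s) (fun _ p => (p.2, nxt p.1 p.2)) i
  let f : ℕ → Fin n := fun i => (g i).1
  have hstep : ∀ i, f (i+1) = nxt (f (i-1)) (f i) := by
    intro i
    match i with
    | 0 => rfl
    | (j + 1) => rfl
  refine ⟨f, rfl, ?_, ?_, ?_⟩
  · intro i hne
    rw [hstep i] at hne ⊢
    exact (hnxt' (f (i-1)) (f i) hne).1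
  · intro i hne
    have e : (i + 1) - 1 = i := rfl
    rw [hstep (i+1), e] at hne ⊢
    exact (hnxt' (f i) (f (i+1)) hne).2
  · intro i hstall x hx
    rw [hstep i] at hstall
    have hnotex : ¬ (∃ y, A (f i) y ∧ y ≠ f (i-1)) := by
      intro h
      have h1 := hnxtT (f (i-1)) (f i) h
      exact hirr h1.1 hstall.symm
    push_neg at hnotex
    have hxeq : x = f (i - 1) := hnotex x hx
    refine ⟨?_, hxeq⟩
    rintro rfl
    exact hirr hx hxeq.symm

end Stmt0
end Chunk5
section Chunk6
namespace Stmt0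
variable {n : ℕ}

theorem path_structure {A : Fin n → Fin n → Prop} {C : Set (Fin n)} {v : Fin n}
    (hvC : v ∈ C)
    (hmem : ∀ {u w}, A u w → u ∈ C ∧ w ∈ C)
    (hsymm : ∀ {u w}, A u w → A w u)
    (hirr : ∀ {u w}, A u w → u ≠ w)
    (hconn : ∀ u ∈ C, Relation.ReflTransGen A v u)
    (hdeg : ∀ u x y z, A u x → A u y → A u z → (x = y ∨ x = z ∨ y = z))
    (hnocyc : ∀ r, 3 ≤ r → ∀ c : ℕ → Fin n,
      (∀ i < r, ∀ j < r, c i = c j → i = j) → c r = c 0 →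
      (∀ i < r, A (c i) (c (i+1))) → False) :
    ∃ (m : ℕ) (f : ℕ → Fin n),
      (∀ i, i ≤ m → f i ∈ C) ∧ (∀ u ∈ C, ∃ j, j ≤ m ∧ f j = u) ∧
      (∀ i, i ≤ m → ∀ j, j ≤ m → f i = f j → i = j) ∧
      (∀ i, i ≤ m → ∀ j, j ≤ m → (A (f i) (f j) ↔ (j = i + 1 ∨ i = j + 1))) := by
  classical
  have hend : ∃ e, e ∈ C ∧ ∀ x y, A e x → A e y → x = y := by
    by_contra hcon
    push_neg at hcon
    obtain ⟨f, hf0, hp1, hp2, hp3⟩ := greedy_walk A hirr v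
    have hnostall : ∀ i, f i ∈ C → f (i+1) ≠ f i := by
      intro i hiC hstall
      obtain ⟨x, y, hx, hy, hxy⟩ := hcon (f i) hiC
      exact hxy (((hp3 i hstall x hx).2).trans ((hp3 i hstall y hy).2).symm)
    have hC : ∀ i, f i ∈ C := by
      intro i
      induction i with
      | zero => exact hf0 ▸ hvC
      | succ j ih => exact (hmem (hp1 j (hnostall j ih))).2
    have hadj : ∀ i, A (f i) (f (i+1)) := fun i => hp1 i (hnostall i (hC i))
    have hnb : ∀ i, f (i+2) ≠ f i := fun i => hp2 i (hnostall (i+1) (hC (i+1)))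
    obtain ⟨i, j, hij, hfe⟩ := Finite.exists_ne_map_eq_of_infinite f
    exact hij (no_repeat_aux hirr hnocyc f (i + j) (fun t _ => hadj t)
      (fun t _ => hnb t) i (by omega) j (by omega) hfe)
  obtain ⟨e, heC, hep⟩ := hend
  obtain ⟨f, hf0, hp1, hp2, hp3⟩ := greedy_walk A hirr e
  have hstall : ∃ i, f (i+1) = f i := by
    by_contra hns
    push_neg at hns
    obtain ⟨i, j, hij, hfe⟩ := Finite.exists_ne_map_eq_of_infinite f
    exact hij (no_repeat_aux hirr hnocyc f (i + j)
      (fun t _ => hp1 t (hns t)) (fun t _ => hp2 t (hns (t+1)))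
      i (by omega) j (by omega) hfe)
  set L := Nat.find hstall with hLdef
  have hstallL : f (L+1) = f L := Nat.find_spec hstall
  have hmin : ∀ i, i < L → f (i+1) ≠ f i := fun i h => Nat.find_min hstall h
  have hadjL : ∀ i, i < L → A (f i) (f (i+1)) := fun i h => hp1 i (hmin i h)
  have hnbL : ∀ i, i + 2 ≤ L → f (i+2) ≠ f i := fun i h => hp2 i (hmin (i+1) (by omega))
  have hinj := no_repeat_aux hirr hnocyc f L hadjL hnbL
  have hC : ∀ i, i ≤ L → f i ∈ C := by
    intro i
    induction i with
    | zero => intro _; exact hf0 ▸ heC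
    | succ j _ => intro h; exact (hmem (hadjL j (by omega))).2
  have hLpos : ∀ x, A (f 0) x → 1 ≤ L := by
    intro x hx
    rcases Nat.eq_zero_or_pos L with h0 | h0
    · exfalso
      rw [h0] at hstallL
      exact (hp3 0 hstallL x hx).1 rfl
    · exact h0
  have hprevA : ∀ i, 1 ≤ i → i ≤ L → A (f i) (f (i-1)) := by
    intro i h1 h2
    have h3 := hadjL (i-1) (by omega)
    have e1 : i - 1 + 1 = i := by omega
    rw [e1] at h3
    exact hsymm h3
  have hclose : ∀ i, i ≤ L → ∀ x, A (f i) x → ∃ j, j ≤ L ∧ f j = x := by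
    intro i hiL x hx
    rcases Nat.eq_zero_or_pos i with rfl | hipos
    · have hL1 : 1 ≤ L := hLpos x hx
      have h1 : A (f 0) (f 1) := hadjL 0 (by omega)
      have hx' : A e x := by rwa [hf0] at hx
      have h1' : A e (f 1) := by rwa [hf0] at h1
      exact ⟨1, by omega, (hep x (f 1) hx' h1').symm⟩
    · rcases Nat.lt_or_ge i L with hiL' | hiL'
      · rcases hdeg (f i) x (f (i-1)) (f (i+1)) hx (hprevA i hipos hiL) (hadjL i hiL')
          with h | h | h
        · exact ⟨i-1, by omega, h.symm⟩
        · exact ⟨i+1, by omega, h.symm⟩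
        · exact absurd (hinj (i-1) (by omega) (i+1) (by omega) h) (by omega)
      · have hiL2 : i = L := by omega
        have hstall_i : f (i+1) = f i := by rw [hiL2]; exact hstallL
        exact ⟨i - 1, by omega, ((hp3 i hstall_i x hx).2).symm⟩
  have hsurj0 : ∀ u, Relation.ReflTransGen A e u → ∃ j, j ≤ L ∧ f j = u := by
    intro u hre
    induction hre with
    | refl => exact ⟨0, by omega, hf0⟩
    | tail _ h2 ih =>
        obtain ⟨j, hj, rfl⟩ := ih
        exact hclose j hj _ h2
  refine ⟨L, f, hC, ?_, hinj, ?_⟩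
  · intro u hu
    exact hsurj0 u ((rtg_reverse hsymm (hconn e heC)).trans (hconn u hu))
  · intro i hiL j hjL
    constructor
    · intro hx
      rcases Nat.eq_zero_or_pos i with rfl | hipos
      · have hL1 : 1 ≤ L := hLpos (f j) hx
        have h1 : A (f 0) (f 1) := hadjL 0 (by omega)
        have hx' : A e (f j) := by rwa [hf0] at hx
        have h1' : A e (f 1) := by rwa [hf0] at h1
        have := hinj j hjL 1 (by omega) (hep (f j) (f 1) hx' h1')
        omega
      · rcases Nat.lt_or_ge i L with hiL' | hiL'
        · rcases hdeg (f i) (f j) (f (i-1)) (f (i+1)) hx (hprevA i hipos hiL)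
            (hadjL i hiL') with h | h | h
          · have := hinj j hjL (i-1) (by omega) h; omega
          · have := hinj j hjL (i+1) (by omega) h; omega
          · exact absurd (hinj (i-1) (by omega) (i+1) (by omega) h) (by omega)
        · have hiL2 : i = L := by omega
          have hstall_i : f (i+1) = f i := by rw [hiL2]; exact hstallL
          have := hinj j hjL (i-1) (by omega) (hp3 i hstall_i (f j) hx).2
          omega
    · intro h
      rcases h with h | h
      · subst h; exact hadjL i (by omega)
      · subst h; exact hprevA (j + 1) (by omega) hiL

end Stmt0
end Chunk6
section Chunk7
namespace Stmt0
variable {n : ℕ} {D : Set (Fin n × Fin n)}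

theorem forward_dir (hloop : ∀ a : Fin n, (a, a) ∉ D) (hH : HTrivial (genSg D))
    (v : Fin n) :
    ∃ m : ℕ, Nonempty ((underlying D).induce (strongComp D v) ≃g SimpleGraph.pathGraph m) := by
  have hNS := noSwap_of_HTrivial (D := D) hH
  set C := strongComp D v with hC
  set A : Fin n → Fin n → Prop :=
    fun u w => u ∈ C ∧ w ∈ C ∧ (underlying D).Adj u w with hA
  have hAdj_def : ∀ {u w : Fin n}, (underlying D).Adj u w ↔
      (u ≠ w ∧ ((u, w) ∈ D ∨ (w, u) ∈ D)) := Iff.rfl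
  have hvC : v ∈ C := ⟨Relation.ReflTransGen.refl, Relation.ReflTransGen.refl⟩
  have hmem : ∀ {u w}, A u w → u ∈ C ∧ w ∈ C := fun h => ⟨h.1, h.2.1⟩
  have hsymm : ∀ {u w}, A u w → A w u := fun h => ⟨h.2.1, h.1, h.2.2.symm⟩
  have hirr : ∀ {u w}, A u w → u ≠ w := fun h => h.2.2.ne
  have hbidirA : ∀ {u w}, A u w → (u, w) ∈ D ∧ (w, u) ∈ D := by
    intro u w h
    rcases (hAdj_def.1 h.2.2).2 with harc | harc
    · exact ⟨harc, bidirected hNS hloop h.1 h.2.1 harc⟩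
    · exact ⟨bidirected hNS hloop h.2.1 h.1 harc, harc⟩
  have hconn : ∀ u ∈ C, Relation.ReflTransGen A v u := by
    intro u hu
    refine Relation.ReflTransGen.mono ?_ _ _ (walk_restrict hu.2 hu.1 Relation.ReflTransGen.refl)
    rintro a b ⟨harc, haC, hbC⟩
    refine ⟨haC, hbC, hAdj_def.2 ⟨?_, Or.inl harc⟩⟩
    rintro rfl
    exact hloop a harc
  have hdeg : ∀ u x y z, A u x → A u y → A u z → (x = y ∨ x = z ∨ y = z) := by
    intro u x y z hux huy huz
    by_contra hcon
    push_neg at hcon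
    obtain ⟨hxy, hxz, hyz⟩ := hcon
    apply hNS
    obtain ⟨α, hα, hs⟩ := swap_of_walks (D := D) (a := x) (b := y) (c := z) hxy hxz hyz
      (Relation.ReflTransGen.head
        ⟨(hbidirA hux).2, hxy, fun h => (hirr huy) h⟩
        (Relation.ReflTransGen.single ⟨(hbidirA huz).1, fun h => (hirr huy) h, hyz.symm⟩))
      (Relation.ReflTransGen.head
        ⟨(hbidirA huy).2, hyz, fun h => (hirr huz) h⟩
        (Relation.ReflTransGen.single ⟨(hbidirA hux).1, fun h => (hirr huz) h, hxz⟩))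
      (Relation.ReflTransGen.head
        ⟨(hbidirA huz).2, fun h => hxz (h.symm), fun h => (hirr hux) h⟩
        (Relation.ReflTransGen.single ⟨(hbidirA huy).1, fun h => (hirr hux) h, fun h => hxy h.symm⟩))
    exact ⟨α, hα, x, y, hxy, hs⟩
  have hnocyc : ∀ r, 3 ≤ r → ∀ c : ℕ → Fin n,
      (∀ i < r, ∀ j < r, c i = c j → i = j) → c r = c 0 →
      (∀ i < r, A (c i) (c (i+1))) → False := by
    intro r hr c hinj hcl hadj
    exact hNS (dswap_of_dcycle hr c hinj hcl (fun i hi => (hbidirA (hadj i hi)).1))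
  obtain ⟨m, f, h1, h2, h3, h4⟩ := path_structure hvC hmem hsymm hirr hconn hdeg hnocyc
  refine ⟨m + 1, ?_⟩
  have hφ : ∀ i : Fin (m + 1), f i.val ∈ C := fun i => h1 i.val (by omega)
  let φ : Fin (m + 1) → ↥C := fun i => ⟨f i.val, hφ i⟩
  have hbij : Function.Bijective φ := by
    constructor
    · intro i j hij
      have : f i.val = f j.val := congrArg Subtype.val hij
      exact Fin.ext (h3 i.val (by omega) j.val (by omega) this)
    · rintro ⟨u, hu⟩
      obtain ⟨j, hj, hfj⟩ := h2 u hu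
      exact ⟨⟨j, by omega⟩, Subtype.ext hfj⟩
  refine ⟨(SimpleGraph.Iso.symm ⟨Equiv.ofBijective φ hbij, ?_⟩ :)⟩
  intro a b
  show ((underlying D).induce C).Adj (φ a) (φ b) ↔ (SimpleGraph.pathGraph (m + 1)).Adj a b
  have lhs : ((underlying D).induce C).Adj (φ a) (φ b) ↔ A (f a.val) (f b.val) := by
    constructor
    · intro h
      exact ⟨hφ a, hφ b, h⟩
    · intro h
      exact h.2.2
  rw [lhs, h4 a.val (by omega) b.val (by omega), SimpleGraph.pathGraph_adj]
  omega

end Stmt0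
end Chunk7
section Chunk8
namespace Stmt0
variable {n : ℕ} {D : Set (Fin n × Fin n)}

theorem backward_dir (hloop : ∀ a : Fin n, (a, a) ∉ D)
    (hiso : ∀ v : Fin n, ∃ m : ℕ,
      Nonempty ((underlying D).induce (strongComp D v) ≃g SimpleGraph.pathGraph m)) :
    HTrivial (genSg D) := by
  classical
  intro x hx y hy hR hL
  by_contra hxy
  -- extract the mutual divisibility witnesses
  have hyRx : y ∈ rIdeal (genSg D) x := by rw [hR]; exact Set.mem_insert _ _
  have hxRy : x ∈ rIdeal (genSg D) y := by rw [← hR]; exact Set.mem_insert _ _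
  have hyLx : y ∈ lIdeal (genSg D) x := by rw [hL]; exact Set.mem_insert _ _
  have hxLy : x ∈ lIdeal (genSg D) y := by rw [← hL]; exact Set.mem_insert _ _
  rcases Set.mem_insert_iff.1 hyRx with h | ⟨s, hsS, hy_eq⟩
  · exact hxy h.symm
  rcases Set.mem_insert_iff.1 hxRy with h | ⟨t, htS, hx_eq⟩
  · exact hxy h
  rcases Set.mem_insert_iff.1 hyLx with h | ⟨s', hs'S, hy_eq'⟩
  · exact hxy h.symm
  rcases Set.mem_insert_iff.1 hxLy with h | ⟨t', ht'S, hx_eq'⟩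
  · exact hxy h
  -- ranges
  have hry : Set.range y = Set.range x := by
    apply le_antisymm
    · have h := Set.range_comp_subset_range s' x
      rwa [show x ∘ s' = y from hy_eq'.symm] at h
    · have h := Set.range_comp_subset_range t' y
      rwa [show y ∘ t' = x from hx_eq'.symm] at h
  have himg : s '' Set.range x = Set.range x := by
    rw [← Set.range_comp, show s ∘ x = y from hy_eq.symm]
    exact hry
  have hmapsTo : Set.MapsTo s (Set.range x) (Set.range x) := by
    intro a ha
    rw [← himg]
    exact Set.mem_image_of_mem s ha
  have hinjOn : Set.InjOn s (Set.range x) := by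
    have hfin : (Set.range x).Finite := Set.toFinite _
    have hsurj : Set.SurjOn s (Set.range x) (Set.range x) := by rw [Set.SurjOn, himg]
    exact ((hfin.surjOn_iff_bijOn_of_mapsTo hmapsTo).1 hsurj).injOn
  -- a point moved by s
  have hmoved : ∃ a ∈ Set.range x, s a ≠ a := by
    by_contra hcon
    push_neg at hcon
    apply hxy
    funext w
    have : y w = s (x w) := by rw [hy_eq]; rfl
    rw [this, hcon (x w) (Set.mem_range_self w)]
  obtain ⟨a, haI, hsa⟩ := hmoved
  set aSeq : ℕ → Fin n := fun t => s^[t] a with haSeq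
  have haSeqI : ∀ t, aSeq t ∈ Set.range x := by
    intro t
    induction t with
    | zero => exact haI
    | succ u ih =>
        have : aSeq (u + 1) = s (aSeq u) := Function.iterate_succ_apply' s u a
        rw [this]
        exact hmapsTo ih
  have hiter_inj : ∀ t, Set.InjOn s^[t] (Set.range x) := by
    intro t
    induction t with
    | zero => exact fun p _ q _ h => h
    | succ u ih =>
        have : s^[u + 1] = s^[u] ∘ s := Function.iterate_succ s u
        rw [this]
        exact Set.InjOn.comp ih hinjOn hmapsTo
  have hkex : ∃ k, 1 ≤ k ∧ s^[k] a = a := by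
    obtain ⟨i, j, hij, heq⟩ :=
      Finite.exists_ne_map_eq_of_infinite (fun t : ℕ => s^[t] a)
    have haux : ∀ i j : ℕ, i < j → s^[i] a = s^[j] a → ∃ k, 1 ≤ k ∧ s^[k] a = a := by
      intro i j hlt he
      refine ⟨j - i, by omega, ?_⟩
      apply hiter_inj i (haSeqI (j - i)) haI
      show s^[i] (s^[j-i] a) = s^[i] a
      rw [← Function.iterate_add_apply]
      have e1 : i + (j - i) = j := by omega
      rw [e1]
      exact he.symm
    rcases Nat.lt_or_ge i j with h | h
    · exact haux i j h heq
    · exact haux j i (by omega) heq.symm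
  obtain ⟨k, hk1, hka⟩ := hkex
  have hper : ∀ t, aSeq (t + k) = aSeq t := by
    intro t
    show s^[t + k] a = s^[t] a
    rw [Function.iterate_add_apply, hka]
  have hperq : ∀ q t, aSeq (t + q * k) = aSeq t := by
    intro q
    induction q with
    | zero => intro t; simp
    | succ r ih =>
        intro t
        have e1 : t + (r + 1) * k = (t + r * k) + k := by ring
        rw [e1, hper, ih]
  have hmod : ∀ t, aSeq t = aSeq (t % k) := by
    intro t
    have h := hperq (t / k) (t % k)
    rwa [Nat.mod_add_div'] at h
  -- word for s and reachability
  obtain ⟨l, hlne, hlD, hs_eq⟩ := mem_genSg_iff.1 hsS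
  have hreach1 : ∀ t, dreach D (aSeq t) (aSeq (t + 1)) := by
    intro t
    have e1 : aSeq (t + 1) = s (aSeq t) := Function.iterate_succ_apply' s t a
    rw [e1, hs_eq]
    exact traj_dreach hlD (aSeq t)
  have hreach : ∀ t t', t ≤ t' → dreach D (aSeq t) (aSeq t') := by
    intro t t' htt
    induction t', htt using Nat.le_induction with
    | base => exact Relation.ReflTransGen.refl
    | succ u hu ih => exact ih.trans (hreach1 u)
  have hd : ∀ t t', dreach D (aSeq t) (aSeq t') := by
    intro t t'
    rcases le_or_gt t t' with h | h
    · exact hreach t t' h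
    · have e1 : aSeq t' = aSeq (t' + t * k) := (hperq t t').symm
      rw [e1]
      have h2 : t ≤ t * k := Nat.le_mul_of_pos_right t (by omega)
      exact hreach t (t' + t * k) (by omega)
  set C := strongComp D (aSeq 0) with hCdef
  have haC : ∀ t, aSeq t ∈ C := fun t => ⟨hd t 0, hd 0 t⟩
  -- position function from the path isomorphism
  obtain ⟨m, ⟨ψ⟩⟩ := hiso (aSeq 0)
  set p : Fin n → ℕ := fun u => if h : u ∈ C then (ψ ⟨u, h⟩ : Fin m).val else 0 with hp
  have hpval : ∀ u (h : u ∈ C), p u = (ψ ⟨u, h⟩ : Fin m).val := by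
    intro u h
    show dite _ _ _ = _
    rw [dif_pos h]
  have hp_inj : ∀ u, u ∈ C → ∀ w, w ∈ C → p u = p w → u = w := by
    intro u hu w hw hpw
    rw [hpval u hu, hpval w hw] at hpw
    have h1 : ψ ⟨u, hu⟩ = ψ ⟨w, hw⟩ := Fin.ext hpw
    have h2 := ψ.toEquiv.injective h1
    exact congrArg Subtype.val h2
  have hp_adj : ∀ u w (hu : u ∈ C) (hw : w ∈ C), (underlying D).Adj u w →
      p u + 1 = p w ∨ p w + 1 = p u := by
    intro u w hu hw hadj
    have h1 : ((underlying D).induce C).Adj ⟨u, hu⟩ ⟨w, hw⟩ := hadj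
    have h2 : (SimpleGraph.pathGraph m).Adj (ψ ⟨u, hu⟩) (ψ ⟨w, hw⟩) :=
      ψ.map_rel_iff.2 h1
    rw [SimpleGraph.pathGraph_adj] at h2
    rw [hpval u hu, hpval w hw]
    exact h2
  -- monotone step
  have hstep : ∀ e ∈ D, ∀ u w : Fin n, u ∈ C → w ∈ C →
      arcT e.1 e.2 u ∈ C → arcT e.1 e.2 w ∈ C → p u ≤ p w →
      p (arcT e.1 e.2 u) ≤ p (arcT e.1 e.2 w) := by
    intro e he u w huC hwC huC' hwC' hpuw
    by_cases hu : u = e.1 <;> by_cases hw : w = e.1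
    · rw [hu, hw]
    · -- u moves to e.2, w stays
      have hne : u ≠ w := fun h => hw (h ▸ hu)
      have hlt : p u < p w := by
        rcases Nat.lt_or_ge (p u) (p w) with h | h
        · exact h
        · exact absurd (hp_inj u huC w hwC (by omega)) hne
      have he12 : e.1 ≠ e.2 := by
        intro h
        apply hloop e.1
        have : e = (e.1, e.2) := rfl
        rw [this, ← h] at he
        exact he
      have hadj : (underlying D).Adj u e.2 := by
        refine ⟨by rw [hu]; exact he12, Or.inl ?_⟩
        rw [hu]
        exact he
      have harcu : arcT e.1 e.2 u = e.2 := by rw [hu]; exact arcT_self e.1 e.2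
      have hC2 : e.2 ∈ C := harcu ▸ huC'
      have := hp_adj u e.2 huC hC2 hadj
      rw [harcu, arcT_ne hw]
      omega
    · -- w moves to e.2, u stays
      have hne : u ≠ w := fun h => hu (h ▸ hw)
      have hlt : p u < p w := by
        rcases Nat.lt_or_ge (p u) (p w) with h | h
        · exact h
        · exact absurd (hp_inj u huC w hwC (by omega)) hne
      have he12 : e.1 ≠ e.2 := by
        intro h
        apply hloop e.1
        have : e = (e.1, e.2) := rfl
        rw [this, ← h] at he
        exact he
      have hadj : (underlying D).Adj w e.2 := by
        refine ⟨by rw [hw]; exact he12, Or.inl ?_⟩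
        rw [hw]
        exact he
      have harcw : arcT e.1 e.2 w = e.2 := by rw [hw]; exact arcT_self e.1 e.2
      have hC2 : e.2 ∈ C := harcw ▸ hwC'
      have := hp_adj w e.2 hwC hC2 hadj
      rw [harcw, arcT_ne hu]
      omega
    · rw [arcT_ne hu, arcT_ne hw]
      exact hpuw
  -- monotone along words
  have hmono : ∀ (l' : List (Fin n × Fin n)), (∀ e ∈ l', e ∈ D) →
      ∀ u w : Fin n, (∀ l₁ l₂, l' = l₁ ++ l₂ → applyW l₁ u ∈ C) →
      (∀ l₁ l₂, l' = l₁ ++ l₂ → applyW l₁ w ∈ C) → p u ≤ p w →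
      p (applyW l' u) ≤ p (applyW l' w) := by
    intro l'
    induction l' with
    | nil => intro _ u w _ _ h; exact h
    | cons e ts ih =>
        intro hD u w hu hw hpuw
        have huC : u ∈ C := hu [] (e :: ts) rfl
        have hwC : w ∈ C := hw [] (e :: ts) rfl
        have huC' : arcT e.1 e.2 u ∈ C := hu [e] ts rfl
        have hwC' : arcT e.1 e.2 w ∈ C := hw [e] ts rfl
        rw [applyW_cons]
        refine ih (fun e' he' => hD e' (by simp [he'])) _ _ ?_ ?_
          (hstep e (hD e (by simp)) u w huC hwC huC' hwC' hpuw)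
        · intro l₁ l₂ hsplit
          have := hu (e :: l₁) l₂ (by simp [hsplit])
          rwa [applyW_cons] at this
        · intro l₁ l₂ hsplit
          have := hw (e :: l₁) l₂ (by simp [hsplit])
          rwa [applyW_cons] at this
  -- trajectories of the cycle points stay in C
  have htraj : ∀ t, ∀ l₁ l₂, l = l₁ ++ l₂ → applyW l₁ (aSeq t) ∈ C := by
    intro t l₁ l₂ hsplit
    have hl₁D : ∀ e ∈ l₁, e ∈ D := fun e he => hlD e (by rw [hsplit]; simp [he])
    have h1 : dreach D (aSeq t) (applyW l₁ (aSeq t)) := traj_dreach hl₁D (aSeq t)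
    have h2 : dreach D (applyW l₁ (aSeq t)) (aSeq (t + 1)) := by
      have e2 : applyW l₂ (applyW l₁ (aSeq t)) = aSeq (t + 1) := by
        calc applyW l₂ (applyW l₁ (aSeq t)) = applyW (l₁ ++ l₂) (aSeq t) :=
              (congrFun (applyW_append l₁ l₂) (aSeq t)).symm
          _ = applyW l (aSeq t) := by rw [← hsplit]
          _ = s (aSeq t) := by rw [← hs_eq]
          _ = aSeq (t + 1) := (Function.iterate_succ_apply' s t a).symm
      rw [← e2]
      exact traj_dreach (fun e he => hlD e (by rw [hsplit]; simp [he])) _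
    exact ⟨h2.trans ((haC (t + 1)).1), (haC t).2.trans h1⟩
  -- pick the minimum position on the cycle
  obtain ⟨i₀, hi₀mem, hi₀min⟩ := Finset.exists_min_image (Finset.range k)
    (fun i => p (aSeq i)) ⟨0, Finset.mem_range.2 (by omega)⟩
  have hi₀k : i₀ < k := Finset.mem_range.1 hi₀mem
  have hjmin : ∀ j : ℕ, p (aSeq i₀) ≤ p (aSeq j) := by
    intro j
    rw [hmod j]
    exact hi₀min (j % k) (Finset.mem_range.2 (Nat.mod_lt j (by omega)))
  have hkey : p (aSeq (i₀ + 1)) ≤ p (aSeq i₀) := by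
    have happ : ∀ t, applyW l (aSeq t) = aSeq (t + 1) := by
      intro t
      have e1 : aSeq (t + 1) = s (aSeq t) := Function.iterate_succ_apply' s t a
      rw [e1, hs_eq]
    have h1 := hmono l hlD (aSeq i₀) (aSeq (i₀ + k - 1)) (htraj i₀) (htraj (i₀ + k - 1))
      (hjmin (i₀ + k - 1))
    rw [happ, happ] at h1
    have e2 : i₀ + k - 1 + 1 = i₀ + k := by omega
    rw [e2, hper] at h1
    exact h1
  have heq : aSeq (i₀ + 1) = aSeq i₀ := by
    apply hp_inj _ (haC (i₀ + 1)) _ (haC i₀)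
    have := hjmin (i₀ + 1)
    omega
  -- the fixed point contradicts s a ≠ a
  have hfix : ∀ t, aSeq (i₀ + t) = aSeq i₀ := by
    intro t
    induction t with
    | zero => rfl
    | succ u ih =>
        have e1 : aSeq (i₀ + (u + 1)) = s (aSeq (i₀ + u)) :=
          Function.iterate_succ_apply' s (i₀ + u) a
        have e2 : aSeq (i₀ + 1) = s (aSeq i₀) := Function.iterate_succ_apply' s i₀ a
        rw [e1, ih, ← e2, heq]
  apply hsa
  have h1 : aSeq k = aSeq i₀ := by
    have := hfix (k - i₀)
    rwa [show i₀ + (k - i₀) = k by omega] at this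
  have h2 : aSeq (k + 1) = aSeq i₀ := by
    have := hfix (k + 1 - i₀)
    rwa [show i₀ + (k + 1 - i₀) = k + 1 by omega] at this
  have h3 : aSeq 1 = aSeq (k + 1) := by
    have := hper 1
    rw [show 1 + k = k + 1 by omega] at this
    exact this.symm
  have hA1 : aSeq 1 = s a := by
    show s^[1] a = s a
    rw [Function.iterate_one]
  show s a = a
  calc s a = aSeq 1 := hA1.symm
    _ = aSeq (k + 1) := h3
    _ = aSeq i₀ := h2
    _ = aSeq k := h1.symm
    _ = a := hka

end Stmt0
end Chunk8
/-- `⟨D⟩` is `H`-trivial iff the underlying graph of every strong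
component of `D` is a path graph. -/
theorem stmt0 (n : ℕ) (D : Set (Fin n × Fin n)) (hloop : ∀ a : Fin n, (a, a) ∉ D) :
    HTrivial (genSg D) ↔
      ∀ v : Fin n, ∃ m : ℕ,
        Nonempty ((underlying D).induce (strongComp D v) ≃g SimpleGraph.pathGraph m) :=
  ⟨fun hH v => Stmt0.forward_dir hloop hH v, fun h => Stmt0.backward_dir hloop h⟩
end

section
/- Let D be a digraph on vertex set {1,…,n} with at least one arc. Then the following are equivalent: (i) l(D)=1; (ii) ⟨D⟩ is aperiodic, i.e. every subgroup of ⟨D⟩ is trivial; (iii) ⟨D⟩ is H-trivial. -/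
namespace Stmt1Aux

open Function

variable {n : ℕ}

theorem sgMul_assoc (a b c : Fin n → Fin n) : sgMul (sgMul a b) c = sgMul a (sgMul b c) := rfl

theorem foldl_comp (l : List (Fin n × Fin n)) (a : Fin n → Fin n) :
    l.foldl (fun f p => arcT p.1 p.2 ∘ f) a
      = (l.foldl (fun f p => arcT p.1 p.2 ∘ f) id) ∘ a := by
  induction l generalizing a with
  | nil => rfl
  | cons p l ih =>
    simp only [List.foldl_cons]
    rw [ih, ih (arcT p.1 p.2 ∘ id)]
    rfl

theorem genSg_mul {D : Set (Fin n × Fin n)} {x y : Fin n → Fin n}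
    (hx : x ∈ genSg D) (hy : y ∈ genSg D) : sgMul x y ∈ genSg D := by
  obtain ⟨l1, h1, hD1, hx⟩ := hx
  obtain ⟨l2, h2, hD2, hy⟩ := hy
  refine ⟨l1 ++ l2, by simp [h1], ?_, ?_⟩
  · intro p hp
    rcases List.mem_append.1 hp with h | h
    exacts [hD1 p h, hD2 p h]
  · rw [List.foldl_append, foldl_comp l2, ← hx, ← hy]
    rfl

theorem genSg_iterate {D : Set (Fin n × Fin n)} {x : Fin n → Fin n}
    (hx : x ∈ genSg D) : ∀ m, x^[m + 1] ∈ genSg D := by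
  intro m
  induction m with
  | zero => simpa using hx
  | succ m ih =>
    have h := genSg_mul ih hx
    have : sgMul (x^[m + 1]) x = x^[m + 1 + 1] := by
      show x ∘ x^[m + 1] = _
      rw [← Function.iterate_succ']
    rwa [this] at h

/-- All cycles of all elements have length 1. -/
def NoBig (S : Set (Fin n → Fin n)) : Prop := ∀ α ∈ S, ∀ k, IsCycleOf α k → k = 1

theorem cycle_iterate {α : Fin n → Fin n} {k : ℕ} (a : ZMod k → Fin n)
    (h : ∀ i, α (a i) = a (i + 1)) (m : ℕ) (i : ZMod k) :
    α^[m] (a i) = a (i + (m : ZMod k)) := by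
  induction m with
  | zero => simp
  | succ m ih =>
    rw [Function.iterate_succ_apply', ih, h]
    congr 1
    push_cast
    ring

theorem cycle_le {α : Fin n → Fin n} {k : ℕ} (hk : IsCycleOf α k) : k ≤ n := by
  obtain ⟨hpos, a, ha, -⟩ := hk
  haveI : NeZero k := ⟨hpos.ne'⟩
  have := Fintype.card_le_of_injective a ha
  simpa [ZMod.card] using this

end Stmt1Aux
namespace Stmt1Aux

variable {n : ℕ}

theorem fix_of_periodic {f : Fin n → Fin n}
    (hP : ∀ k, IsCycleOf f k → k = 1) {w : Fin n} {d : ℕ} (hd : 0 < d)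
    (hw : f^[d] w = w) : f w = w := by
  classical
  have hex : ∃ e, 0 < e ∧ f^[e] w = w := ⟨d, hd, hw⟩
  set e := Nat.find hex with he
  obtain ⟨hepos, hew⟩ := Nat.find_spec hex
  have hmul : ∀ c, f^[e * c] w = w := by
    intro c
    induction c with
    | zero => simp
    | succ c ih => rw [Nat.mul_succ, Function.iterate_add_apply, hew, ih]
  have hmod : ∀ m, f^[m] w = f^[m % e] w := by
    intro m
    conv_lhs => rw [← Nat.mod_add_div m e]
    rw [Function.iterate_add_apply, hmul]
  have hlt : ∀ p q, p < q → q < e → f^[p] w ≠ f^[q] w := by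
    intro p q hpq hqe hne
    have h1 : f^[(e - q) + p] w = w := by
      have h0 : f^[e - q] (f^[p] w) = f^[e - q] (f^[q] w) := by rw [hne]
      rw [← Function.iterate_add_apply, ← Function.iterate_add_apply,
        show e - q + q = e by omega, hew] at h0
      exact h0
    exact Nat.find_min hex (show (e - q) + p < e by omega) ⟨by omega, h1⟩
  haveI : NeZero e := ⟨hepos.ne'⟩
  have hcyc : IsCycleOf f e := by
    refine ⟨hepos, fun i : ZMod e => f^[i.val] w, ?_, ?_⟩
    · intro i j hij
      by_contra hne
      have hv : i.val ≠ j.val := fun h => hne (ZMod.val_injective e h)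
      rcases lt_or_gt_of_ne hv with h | h
      · exact hlt _ _ h (ZMod.val_lt j) hij
      · exact hlt _ _ h (ZMod.val_lt i) hij.symm
    · intro i
      show f (f^[i.val] w) = f^[(i + 1).val] w
      rw [← Function.iterate_succ_apply' f i.val w, hmod (i.val + 1)]
      congr 1
      rw [ZMod.val_add, ZMod.val_one_eq_one_mod, Nat.add_mod_mod]
  have he1 : e = 1 := hP e hcyc
  have hew' : f^[e] w = w := by rw [he]; exact hew
  rw [he1] at hew'
  simpa using hew'

theorem exists_repeat (f : Fin n → Fin n) (hn : 0 < n) (v : Fin n) :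
    ∃ p q, p < q ∧ q ≤ n ∧ f^[p] v = f^[q] v := by
  have hcard : Fintype.card (Fin n) < Fintype.card (Fin (n + 1)) := by simp
  obtain ⟨i, j, hij, h⟩ :=
    Fintype.exists_ne_map_eq_of_card_lt (fun i : Fin (n + 1) => f^[i.val] v) hcard
  rcases lt_or_gt_of_ne (show i.val ≠ j.val from fun hh => hij (Fin.ext hh)) with hlt | hlt
  · exact ⟨i.val, j.val, hlt, Nat.lt_succ_iff.mp j.isLt, h⟩
  · exact ⟨j.val, i.val, hlt, Nat.lt_succ_iff.mp i.isLt, h.symm⟩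

theorem iterate_stab {f : Fin n → Fin n}
    (hP : ∀ k, IsCycleOf f k → k = 1) (hn : 0 < n) : f^[n] = f^[n + 1] := by
  funext v
  obtain ⟨p, q, hpq, hq, hrep⟩ := exists_repeat f hn v
  have hfix : f (f^[p] v) = f^[p] v := by
    apply fix_of_periodic hP (d := q - p) (by omega)
    rw [← Function.iterate_add_apply, show q - p + p = q by omega]
    exact hrep.symm
  have hall : ∀ m, p ≤ m → f^[m] v = f^[p] v := by
    intro m hm
    induction m, hm using Nat.le_induction with
    | base => rfl
    | succ m hm ih => rw [Function.iterate_succ_apply', ih, hfix]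
  rw [hall n (by omega), hall (n + 1) (by omega)]

theorem iterate_factorial_stab (f : Fin n → Fin n) (hn : 0 < n) :
    ∀ m, n ≤ m → f^[m + n.factorial] = f^[m] := by
  have base : ∀ v, f^[n + n.factorial] v = f^[n] v := by
    intro v
    obtain ⟨p, q, hpq, hq, hrep⟩ := exists_repeat f hn v
    have hdw : f^[q - p] (f^[p] v) = f^[p] v := by
      rw [← Function.iterate_add_apply, show q - p + p = q by omega]
      exact hrep.symm
    obtain ⟨c, hc⟩ : (q - p) ∣ n.factorial := Nat.dvd_factorial (by omega) (by omega)
    have hcw : f^[n.factorial] (f^[p] v) = f^[p] v := by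
      rw [hc]
      clear hc hrep
      induction c with
      | zero => simp
      | succ c ih => rw [Nat.mul_succ, Function.iterate_add_apply, hdw, ih]
    calc f^[n + n.factorial] v = f^[(n - p) + n.factorial + p] v := by congr 1; omega
    _ = f^[n - p] (f^[n.factorial] (f^[p] v)) := by
        rw [Function.iterate_add_apply, Function.iterate_add_apply]
    _ = f^[n - p] (f^[p] v) := by rw [hcw]
    _ = f^[n] v := by rw [← Function.iterate_add_apply]; congr 1; omega
  intro m hm
  funext v
  calc f^[m + n.factorial] v = f^[m - n] (f^[n + n.factorial] v) := by
        rw [← Function.iterate_add_apply]; congr 1; omega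
  _ = f^[m - n] (f^[n] v) := by rw [base]
  _ = f^[m] v := by rw [← Function.iterate_add_apply]; congr 1; omega

theorem iterate_per (f : Fin n → Fin n) (hn : 0 < n) (m : ℕ) (hm : n ≤ m) (j : ℕ) :
    f^[m + j * n.factorial] = f^[m] := by
  induction j with
  | zero => simp
  | succ j ih =>
    rw [Nat.succ_mul, ← Nat.add_assoc,
      iterate_factorial_stab f hn (m + j * n.factorial) (by omega), ih]

end Stmt1Aux
namespace Stmt1Aux

variable {n : ℕ}

theorem n_le_N (hn : 0 < n) : n ≤ n * n.factorial :=
  Nat.le_mul_of_pos_right n (Nat.factorial_pos n)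

theorem xy_ne {α : Fin n → Fin n} {k : ℕ} (hk : IsCycleOf α k) (hk2 : 2 ≤ k) :
    α^[n * n.factorial] ≠ α^[n * n.factorial + 1] := by
  obtain ⟨hpos, a, ha, hcyc⟩ := hk
  haveI : NeZero k := ⟨by omega⟩
  haveI : Fact (1 < k) := ⟨by omega⟩
  intro h
  have h0 := congrFun h (a 0)
  rw [cycle_iterate a hcyc, cycle_iterate a hcyc] at h0
  have hkn : k ≤ n := cycle_le ⟨hpos, a, ha, hcyc⟩
  have hN : ((n * n.factorial : ℕ) : ZMod k) = 0 := by
    rw [ZMod.natCast_eq_zero_iff]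
    exact dvd_mul_of_dvd_right (Nat.dvd_factorial (by omega) hkn) n
  have h1 := ha h0
  rw [Nat.cast_add, Nat.cast_one, hN] at h1
  simp only [add_zero, zero_add] at h1
  exact one_ne_zero h1.symm

theorem hmulNN (α : Fin n → Fin n) (hn : 0 < n) (s t : ℕ) :
    sgMul (α^[n * n.factorial + s]) (α^[n * n.factorial + t])
      = α^[n * n.factorial + (s + t)] := by
  show α^[n * n.factorial + t] ∘ α^[n * n.factorial + s] = _
  rw [← Function.iterate_add]
  have h := iterate_per α hn (n * n.factorial + (s + t))
    (le_trans (n_le_N hn) (Nat.le_add_right _ _)) n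
  rw [show n * n.factorial + t + (n * n.factorial + s)
      = n * n.factorial + (s + t) + n * n.factorial by omega]
  exact h

theorem pow_N_add_mul (α : Fin n → Fin n) (hn : 0 < n) (c : ℕ) :
    α^[n * n.factorial + c * n.factorial] = α^[n * n.factorial] :=
  iterate_per α hn (n * n.factorial) (n_le_N hn) c

theorem mem_pow_N {D : Set (Fin n × Fin n)} {α : Fin n → Fin n}
    (hα : α ∈ genSg D) (hn : 0 < n) (s : ℕ) : α^[n * n.factorial + s] ∈ genSg D := by
  have hN : 1 ≤ n * n.factorial := le_trans hn (n_le_N hn)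
  have := genSg_iterate hα (n * n.factorial + s - 1)
  rwa [show n * n.factorial + s - 1 + 1 = n * n.factorial + s by omega] at this

theorem not_aperiodic_of_big {D : Set (Fin n × Fin n)} {α : Fin n → Fin n} {k : ℕ}
    (hn : 2 ≤ n) (hα : α ∈ genSg D) (hk : IsCycleOf α k) (hk2 : 2 ≤ k)
    (hap : SgAperiodic (genSg D)) : False := by
  have hnpos : 0 < n := by omega
  have hG : IsSubgroupIn (genSg D) {β | ∃ s, β = α^[n * n.factorial + s]} := by
    refine ⟨?_, ?_, α^[n * n.factorial + 0], ⟨0, rfl⟩, ?_, ?_⟩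
    · rintro β ⟨s, rfl⟩
      exact mem_pow_N hα hnpos s
    · rintro x ⟨s, rfl⟩ y ⟨t, rfl⟩
      exact ⟨s + t, hmulNN α hnpos s t⟩
    · rintro x ⟨s, rfl⟩
      constructor
      · rw [hmulNN α hnpos 0 s, Nat.zero_add]
      · rw [hmulNN α hnpos s 0, Nat.add_zero]
    · rintro x ⟨s, rfl⟩
      refine ⟨α^[n * n.factorial + (n.factorial - s % n.factorial)], ⟨_, rfl⟩, ?_, ?_⟩
      · rw [hmulNN α hnpos]
        have harith : s + (n.factorial - s % n.factorial) = (s / n.factorial + 1) * n.factorial := by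
          have h1 := Nat.mod_lt s (Nat.factorial_pos n)
          have h2 := Nat.mod_add_div s n.factorial
          calc s + (n.factorial - s % n.factorial)
              = s % n.factorial + n.factorial * (s / n.factorial)
                + (n.factorial - s % n.factorial) := by rw [h2]
          _ = n.factorial * (s / n.factorial) + n.factorial := by omega
          _ = (s / n.factorial + 1) * n.factorial := by ring
        rw [harith, pow_N_add_mul α hnpos, ← Nat.add_zero (n * n.factorial)]
      · rw [hmulNN α hnpos]
        have harith : (n.factorial - s % n.factorial) + s = (s / n.factorial + 1) * n.factorial := by
          have h1 := Nat.mod_lt s (Nat.factorial_pos n)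
          have h2 := Nat.mod_add_div s n.factorial
          calc (n.factorial - s % n.factorial) + s
              = (n.factorial - s % n.factorial)
                + (s % n.factorial + n.factorial * (s / n.factorial)) := by rw [h2]
          _ = n.factorial * (s / n.factorial) + n.factorial := by omega
          _ = (s / n.factorial + 1) * n.factorial := by ring
        rw [harith, pow_N_add_mul α hnpos, ← Nat.add_zero (n * n.factorial)]
  have hsub := hap _ hG
  have h01 := hsub (show α^[n * n.factorial + 0] ∈ _ from ⟨0, rfl⟩)
    (show α^[n * n.factorial + 1] ∈ _ from ⟨1, rfl⟩)
  exact xy_ne hk hk2 (by simpa using h01)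

end Stmt1Aux
namespace Stmt1Aux

variable {n : ℕ}

theorem rIdeal_eq_of {S : Set (Fin n → Fin n)} (hS : ∀ a ∈ S, ∀ b ∈ S, sgMul a b ∈ S)
    {x y c d : Fin n → Fin n} (hc : c ∈ S) (hd : d ∈ S)
    (h1 : sgMul x c = y) (h2 : sgMul y d = x) : rIdeal S x = rIdeal S y := by
  have step : ∀ u v e : Fin n → Fin n, e ∈ S → sgMul u e = v → rIdeal S v ⊆ rIdeal S u := by
    intro u v e he hev β hβ
    rcases Set.mem_insert_iff.mp hβ with rfl | ⟨s, hs, rfl⟩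
    · exact Set.mem_insert_iff.mpr (Or.inr ⟨e, he, hev.symm⟩)
    · exact Set.mem_insert_iff.mpr (Or.inr ⟨sgMul e s, hS e he s hs, by rw [← hev]; rfl⟩)
  exact Set.Subset.antisymm (step y x d hd h2) (step x y c hc h1)

theorem lIdeal_eq_of {S : Set (Fin n → Fin n)} (hS : ∀ a ∈ S, ∀ b ∈ S, sgMul a b ∈ S)
    {x y c d : Fin n → Fin n} (hc : c ∈ S) (hd : d ∈ S)
    (h1 : sgMul c x = y) (h2 : sgMul d y = x) : lIdeal S x = lIdeal S y := by
  have step : ∀ u v e : Fin n → Fin n, e ∈ S → sgMul e u = v → lIdeal S v ⊆ lIdeal S u := by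
    intro u v e he hev β hβ
    rcases Set.mem_insert_iff.mp hβ with rfl | ⟨s, hs, rfl⟩
    · exact Set.mem_insert_iff.mpr (Or.inr ⟨e, he, hev.symm⟩)
    · exact Set.mem_insert_iff.mpr (Or.inr ⟨sgMul s e, hS s hs e he, by rw [← hev]; rfl⟩)
  exact Set.Subset.antisymm (step y x d hd h2) (step x y c hc h1)

theorem not_htrivial_of_big {D : Set (Fin n × Fin n)} {α : Fin n → Fin n} {k : ℕ}
    (hn : 2 ≤ n) (hα : α ∈ genSg D) (hk : IsCycleOf α k) (hk2 : 2 ≤ k)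
    (hH : HTrivial (genSg D)) : False := by
  have hnpos : 0 < n := by omega
  have hL2 : 2 ≤ n.factorial := le_trans hn (Nat.self_le_factorial n)
  have hx : α^[n * n.factorial + 0] ∈ genSg D := mem_pow_N hα hnpos 0
  have hy : α^[n * n.factorial + 1] ∈ genSg D := mem_pow_N hα hnpos 1
  have hc : α ∈ genSg D := by simpa using genSg_iterate hα 0
  have hβ : α^[n.factorial - 1] ∈ genSg D := by
    have := genSg_iterate hα (n.factorial - 2)
    rwa [show n.factorial - 2 + 1 = n.factorial - 1 by omega] at this
  have hNL : α^[n * n.factorial + n.factorial] = α^[n * n.factorial] := by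
    have := iterate_per α hnpos (n * n.factorial) (n_le_N hnpos) 1
    rwa [one_mul] at this
  have h1 : sgMul (α^[n * n.factorial + 0]) α = α^[n * n.factorial + 1] := by
    show α ∘ α^[n * n.factorial + 0] = _
    rw [Nat.add_zero, ← Function.iterate_succ']
  have h2 : sgMul (α^[n * n.factorial + 1]) (α^[n.factorial - 1]) = α^[n * n.factorial + 0] := by
    show α^[n.factorial - 1] ∘ α^[n * n.factorial + 1] = _
    rw [← Function.iterate_add,
      show n.factorial - 1 + (n * n.factorial + 1) = n * n.factorial + n.factorial by omega,
      hNL, Nat.add_zero]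
  have h1' : sgMul α (α^[n * n.factorial + 0]) = α^[n * n.factorial + 1] := by
    show α^[n * n.factorial + 0] ∘ α = _
    rw [Nat.add_zero, ← Function.iterate_succ]
  have h2' : sgMul (α^[n.factorial - 1]) (α^[n * n.factorial + 1]) = α^[n * n.factorial + 0] := by
    show α^[n * n.factorial + 1] ∘ α^[n.factorial - 1] = _
    rw [← Function.iterate_add,
      show n * n.factorial + 1 + (n.factorial - 1) = n * n.factorial + n.factorial by omega,
      hNL, Nat.add_zero]
  have hclosed : ∀ a ∈ genSg D, ∀ b ∈ genSg D, sgMul a b ∈ genSg D :=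
    fun a ha b hb => genSg_mul ha hb
  have hR : RRel (genSg D) (α^[n * n.factorial + 0]) (α^[n * n.factorial + 1]) :=
    rIdeal_eq_of hclosed hc hβ h1 h2
  have hL : LRel (genSg D) (α^[n * n.factorial + 0]) (α^[n * n.factorial + 1]) :=
    lIdeal_eq_of hclosed hc hβ h1' h2'
  have := hH _ hx _ hy hR hL
  exact xy_ne hk hk2 (by simpa using this)

end Stmt1Aux
namespace Stmt1Aux

variable {n : ℕ}

theorem aperiodic_of_nobig {D : Set (Fin n × Fin n)} (hn : 0 < n)
    (hP : NoBig (genSg D)) : SgAperiodic (genSg D) := by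
  intro G hG
  obtain ⟨hGS, hmul, e, heG, hid, hinv⟩ := hG
  have key : ∀ x ∈ G, x = e := by
    intro x hx
    have hpow : ∀ m, x^[m + 1] ∈ G := by
      intro m
      induction m with
      | zero => simpa using hx
      | succ m ih =>
        have h := hmul _ ih _ hx
        have heq : sgMul (x^[m + 1]) x = x^[m + 1 + 1] := by
          show x ∘ x^[m + 1] = _
          rw [← Function.iterate_succ']
        rwa [heq] at h
    have hxn : x^[n] ∈ G := by
      have := hpow (n - 1)
      rwa [show n - 1 + 1 = n by omega] at this
    have hstab : x^[n] = x^[n + 1] := iterate_stab (fun k hk => hP x (hGS hx) k hk) hn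
    obtain ⟨y, hyG, hy1, hy2⟩ := hinv (x^[n]) hxn
    have h5 : sgMul (x^[n]) x = x^[n] := by
      show x ∘ x^[n] = x^[n]
      rw [← Function.iterate_succ', ← hstab]
    calc x = sgMul e x := (hid x hx).1.symm
    _ = sgMul (sgMul y (x^[n])) x := by rw [hy2]
    _ = sgMul y (sgMul (x^[n]) x) := rfl
    _ = sgMul y (x^[n]) := by rw [h5]
    _ = e := hy2
  intro a ha b hb
  rw [key a ha, key b hb]

theorem htrivial_of_nobig {D : Set (Fin n × Fin n)} (hn : 0 < n)
    (hP : NoBig (genSg D)) : HTrivial (genSg D) := by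
  intro x hx y hy hR hL
  have hy_mem : y ∈ rIdeal (genSg D) x := by
    rw [hR]; exact Set.mem_insert _ _
  rcases Set.mem_insert_iff.mp hy_mem with h | ⟨s, hs, hsx⟩
  · exact h.symm
  have hy_meml : y ∈ lIdeal (genSg D) x := by
    rw [hL]; exact Set.mem_insert _ _
  rcases Set.mem_insert_iff.mp hy_meml with h | ⟨u, hu, hux⟩
  · exact h.symm
  have hx_meml : x ∈ lIdeal (genSg D) y := by
    rw [← hL]; exact Set.mem_insert _ _
  rcases Set.mem_insert_iff.mp hx_meml with h | ⟨v, hv, hvy⟩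
  · exact h
  -- ranges are equal
  have hry : Set.range y ⊆ Set.range x := by
    rw [hux]
    rintro b ⟨w, rfl⟩
    exact ⟨u w, rfl⟩
  have hrx : Set.range x ⊆ Set.range y := by
    rw [hvy]
    rintro b ⟨w, rfl⟩
    exact ⟨v w, rfl⟩
  have hrange : Set.range y = Set.range x := Set.Subset.antisymm hry hrx
  have himg : s '' Set.range x = Set.range x := by
    rw [← Set.range_comp, show s ∘ x = y from hsx.symm]
    exact hrange
  have hmaps : Set.MapsTo s (Set.range x) (Set.range x) := by
    intro b hb
    rw [← himg]
    exact Set.mem_image_of_mem s hb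
  have hsurj : Set.SurjOn s (Set.range x) (Set.range x) := by
    rw [Set.SurjOn, himg]
  have hinj : Set.InjOn s (Set.range x) :=
    (((Set.toFinite _).surjOn_iff_bijOn_of_mapsTo hmaps).mp hsurj).injOn
  have hmaps_it : ∀ m, Set.MapsTo (s^[m]) (Set.range x) (Set.range x) := by
    intro m
    induction m with
    | zero => simp only [Function.iterate_zero]; exact Set.mapsTo_id _
    | succ m ih =>
      rw [Function.iterate_succ']
      exact hmaps.comp ih
  have hinj_it : ∀ m, Set.InjOn (s^[m]) (Set.range x) := by
    intro m
    induction m with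
    | zero => simpa using Set.injOn_id _
    | succ m ih =>
      rw [Function.iterate_succ']
      exact hinj.comp ih (hmaps_it m)
  have key : ∀ w : Fin n, s (x w) = x w := by
    intro w
    obtain ⟨p, q, hpq, hq, hrep⟩ := exists_repeat s hn (x w)
    have hb : x w ∈ Set.range x := ⟨w, rfl⟩
    have h5 : s^[p] (x w) = s^[p] (s^[q - p] (x w)) := by
      rw [← Function.iterate_add_apply, show p + (q - p) = q by omega]
      exact hrep
    have h6 : x w = s^[q - p] (x w) := hinj_it p hb (hmaps_it (q - p) hb) h5
    exact fix_of_periodic (fun k hk => hP s hs k hk) (d := q - p) (by omega) h6.symm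
  have hyx : y = x := by
    rw [hsx]
    funext w
    exact key w
  exact hyx.symm

theorem nobig_iff_lD {D : Set (Fin n × Fin n)} (hloop : ∀ a : Fin n, (a, a) ∉ D)
    (hne : D.Nonempty) : lD D = 1 ↔ NoBig (genSg D) := by
  obtain ⟨⟨a, b⟩, hab⟩ := hne
  have harc : arcT a b ∈ genSg D := by
    refine ⟨[(a, b)], by simp, by simp [hab], ?_⟩
    simp only [List.foldl_cons, List.foldl_nil]
    rfl
  have h1cyc : IsCycleOf (arcT a b) 1 := by
    refine ⟨one_pos, fun _ => b, fun i j _ => Subsingleton.elim i j, fun i => ?_⟩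
    show arcT a b b = b
    unfold arcT
    split <;> rfl
  have h1mem : (1 : ℕ) ∈ {k | ∃ α ∈ genSg D, IsCycleOf α k} := ⟨arcT a b, harc, h1cyc⟩
  have hbdd : BddAbove {k | ∃ α ∈ genSg D, IsCycleOf α k} := by
    refine ⟨n, ?_⟩
    rintro k ⟨α, _, hk⟩
    exact cycle_le hk
  constructor
  · intro h α hα k hk
    have hk1 : k ≤ 1 := h ▸ le_csSup hbdd ⟨α, hα, hk⟩
    have := hk.1
    omega
  · intro hP
    have hset : {k | ∃ α ∈ genSg D, IsCycleOf α k} = {1} := by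
      ext k
      constructor
      · rintro ⟨α, hα, hk⟩
        exact hP α hα k hk
      · rintro rfl
        exact h1mem
    rw [lD, hset, csSup_singleton]

end Stmt1Aux
/-- For a digraph with at least one arc: `l(D) = 1`, `⟨D⟩` aperiodic and
`⟨D⟩` being `H`-trivial are equivalent. -/
theorem stmt1 (n : ℕ) (D : Set (Fin n × Fin n)) (hloop : ∀ a : Fin n, (a, a) ∉ D)
    (hne : D.Nonempty) :
    List.TFAE [lD D = 1, SgAperiodic (genSg D), HTrivial (genSg D)] := by
  have hn : 2 ≤ n := by
    obtain ⟨⟨a, b⟩, hab⟩ := hne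
    have hab' : a ≠ b := fun h => hloop a (by rwa [← h] at hab)
    by_contra h
    push_neg at h
    interval_cases n
    · exact a.elim0
    · exact hab' (Subsingleton.elim a b)
  have hiff := Stmt1Aux.nobig_iff_lD hloop hne
  tfae_have 1 → 2 := fun h => Stmt1Aux.aperiodic_of_nobig (by omega) (hiff.mp h)
  tfae_have 2 → 1 := by
    intro h2
    rw [hiff]
    intro α hα k hk
    by_contra hk1
    have hk2 : 2 ≤ k := by have := hk.1; omega
    exact Stmt1Aux.not_aperiodic_of_big hn hα hk hk2 h2
  tfae_have 1 → 3 := fun h => Stmt1Aux.htrivial_of_nobig (by omega) (hiff.mp h)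
  tfae_have 3 → 1 := by
    intro h3
    rw [hiff]
    intro α hα k hk
    by_contra hk1
    have hk2 : 2 ≤ k := by have := hk.1; omega
    exact Stmt1Aux.not_htrivial_of_big hn hα hk hk2 h3
  tfae_finish
end

section
/- For every n≥3, the cycle graph C_n satisfies l(C_n)=n−1. -/
namespace Stmt2Aux

open Fin.NatCast

/-- The folding step used in `genSg`. -/
def stp {n : ℕ} : (Fin n → Fin n) → (Fin n × Fin n) → (Fin n → Fin n) :=
  fun f p => arcT p.1 p.2 ∘ f

lemma foldl_comp {n : ℕ} (l : List (Fin n × Fin n)) (g : Fin n → Fin n) :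
    l.foldl stp g = (l.foldl stp id) ∘ g := by
  induction l generalizing g with
  | nil => rfl
  | cons p l ih =>
    simp only [List.foldl_cons]
    rw [ih, ih (stp id p)]
    rfl

lemma genSg_not_inj {n : ℕ} {D : Set (Fin n × Fin n)} (hD : ∀ p ∈ D, p.1 ≠ p.2)
    {α : Fin n → Fin n} (hα : α ∈ genSg D) : ¬ Function.Injective α := by
  obtain ⟨l, hne, hmem, rfl⟩ := hα
  cases l with
  | nil => exact absurd rfl hne
  | cons p l =>
    intro hinj
    have hfold : (p :: l).foldl (fun f q => arcT q.1 q.2 ∘ f) id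
        = (l.foldl stp id) ∘ (arcT p.1 p.2 ∘ id) := by
      rw [List.foldl_cons]
      exact foldl_comp l _
    rw [hfold] at hinj
    have h1 : Function.Injective (arcT p.1 p.2 ∘ id) := Function.Injective.of_comp hinj
    have hnep := hD p (hmem p List.mem_cons_self)
    have heq : (arcT p.1 p.2 ∘ id) p.1 = (arcT p.1 p.2 ∘ id) p.2 := by
      simp [arcT, Function.comp]
    exact hnep (h1 heq)

lemma cycle_bound {n : ℕ} (hn : 3 ≤ n) {α : Fin n → Fin n} (hni : ¬ Function.Injective α)
    {k : ℕ} (hc : IsCycleOf α k) : k ≤ n - 1 := by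
  obtain ⟨hk, a, ha, hcyc⟩ := hc
  haveI : NeZero k := ⟨hk.ne'⟩
  have hkn : k ≤ n := by
    have := Fintype.card_le_of_injective a ha
    simpa [ZMod.card] using this
  rcases lt_or_eq_of_le hkn with h | h
  · omega
  · exfalso
    subst h
    have hbij : Function.Bijective a :=
      (Fintype.bijective_iff_injective_and_card a).2 ⟨ha, by simp [ZMod.card]⟩
    have hsurj : Function.Surjective α := by
      intro v
      obtain ⟨i, rfl⟩ := hbij.2 v
      refine ⟨a (i - 1), ?_⟩
      rw [hcyc, sub_add_cancel]
    exact hni (Finite.injective_iff_surjective.mpr hsurj)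

/-- The "shift down by one on `{1,…,m}`" map. -/
def shiftF (n m : ℕ) : Fin n → Fin n := fun v =>
  if 1 ≤ v.val ∧ v.val ≤ m then ⟨v.val - 1, lt_of_le_of_lt (Nat.sub_le _ _) v.isLt⟩ else v

lemma fold_shift {n : ℕ} [NeZero n] : ∀ m : ℕ, m + 1 ≤ n →
    ((List.range m).map (fun k => (((k + 1 : ℕ) : Fin n), ((k : ℕ) : Fin n)))).foldl stp id
      = shiftF n m := by
  intro m
  induction m with
  | zero =>
    intro _
    funext v
    simp only [List.range_zero, List.map_nil, List.foldl_nil, shiftF]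
    rw [if_neg (by omega)]
    rfl
  | succ m ih =>
    intro hm
    rw [List.range_succ, List.map_append, List.foldl_append, ih (by omega)]
    funext v
    have c1 : ((m + 1 : ℕ) : Fin n).val = m + 1 := Fin.val_cast_of_lt (by omega)
    have c0 : ((m : ℕ) : Fin n).val = m := Fin.val_cast_of_lt (by omega)
    simp only [List.map_cons, List.map_nil, List.foldl_cons, List.foldl_nil, stp,
      Function.comp, arcT, shiftF]
    by_cases h1 : 1 ≤ v.val ∧ v.val ≤ m
    · simp only [if_pos h1]
      rw [if_neg (by rw [Fin.ext_iff, c1]; simp only [Fin.val_mk]; omega),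
        if_pos (by omega : 1 ≤ v.val ∧ v.val ≤ m + 1)]
    · simp only [if_neg h1]
      by_cases h2 : v.val = m + 1
      · rw [if_pos (by rw [Fin.ext_iff, c1]; omega), if_pos (by omega)]
        rw [Fin.ext_iff, c0]
        simp only [Fin.val_mk]
        omega
      · rw [if_neg (by rw [Fin.ext_iff, c1]; omega), if_neg (by omega)]

end Stmt2Aux

open Stmt2Aux Fin.NatCast in
/-- `l(C_n) = n - 1` for `n ≥ 3`. -/
theorem stmt2 (n : ℕ) (hn : 3 ≤ n) : lG (SimpleGraph.cycleGraph n) = n - 1 := by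
  classical
  haveI : NeZero n := ⟨by omega⟩
  set D : Set (Fin n × Fin n) := arcsOf (SimpleGraph.cycleGraph n) with hDdef
  have hD : ∀ p ∈ D, p.1 ≠ p.2 := fun p hp => (SimpleGraph.Adj.ne hp)
  -- the witness word and its value
  set L : List (Fin n × Fin n) :=
    ((List.range (n - 1)).map (fun k => (((k + 1 : ℕ) : Fin n), ((k : ℕ) : Fin n)))) ++
      [((0 : Fin n), ((n - 1 : ℕ) : Fin n))] with hLdef
  have hLne : L ≠ [] := by simp [hLdef]
  have cNm : ((n - 1 : ℕ) : Fin n).val = n - 1 := Fin.val_cast_of_lt (by omega)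
  have hLmem : ∀ p ∈ L, p ∈ D := by
    intro p hp
    rw [hLdef] at hp
    rcases List.mem_append.1 hp with h | h
    · obtain ⟨k, hk, rfl⟩ := List.mem_map.1 h
      rw [List.mem_range] at hk
      have ck1 : ((k + 1 : ℕ) : Fin n).val = k + 1 := Fin.val_cast_of_lt (by omega)
      have ck : ((k : ℕ) : Fin n).val = k := Fin.val_cast_of_lt (by omega)
      show (SimpleGraph.cycleGraph n).Adj _ _
      rw [SimpleGraph.cycleGraph_adj']
      left
      rw [Fin.sub_def]
      show ((n - ((k : ℕ) : Fin n).val) + ((k + 1 : ℕ) : Fin n).val) % n = 1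
      rw [ck, ck1, show n - k + (k + 1) = n + 1 by omega, Nat.add_mod_left,
        Nat.mod_eq_of_lt (by omega)]
    · rw [List.mem_singleton] at h
      subst h
      show (SimpleGraph.cycleGraph n).Adj _ _
      rw [SimpleGraph.cycleGraph_adj']
      left
      rw [Fin.sub_def]
      show ((n - ((n - 1 : ℕ) : Fin n).val) + (0 : Fin n).val) % n = 1
      rw [cNm, Fin.val_zero, show n - (n - 1) + 0 = 1 by omega, Nat.mod_eq_of_lt (by omega)]
  -- the value of the word
  set β : Fin n → Fin n := fun v =>
    if v.val ≤ 1 then ((n - 1 : ℕ) : Fin n)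
    else ⟨v.val - 1, lt_of_le_of_lt (Nat.sub_le _ _) v.isLt⟩ with hβdef
  have hfold : L.foldl stp id = β := by
    rw [hLdef, List.foldl_append, fold_shift (n - 1) (by omega)]
    funext v
    simp only [List.foldl_cons, List.foldl_nil, stp, Function.comp, arcT, shiftF, hβdef]
    by_cases h1 : 1 ≤ v.val ∧ v.val ≤ n - 1
    · simp only [if_pos h1]
      by_cases h2 : v.val = 1
      · rw [if_pos (by rw [Fin.ext_iff, Fin.val_zero]; simp only [Fin.val_mk]; omega),
          if_pos (by omega)]
      · rw [if_neg (by rw [Fin.ext_iff, Fin.val_zero]; simp only [Fin.val_mk]; omega),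
          if_neg (by omega)]
    · have hv0 : v.val = 0 := by have := v.isLt; omega
      simp only [if_neg h1]
      rw [if_pos (by rw [Fin.ext_iff, Fin.val_zero]; omega), if_pos (by omega)]
  have hβmem : β ∈ genSg D := ⟨L, hLne, hLmem, hfold.symm⟩
  -- β has a cycle of length n - 1
  haveI : NeZero (n - 1) := ⟨by omega⟩
  haveI : Fact (1 < n - 1) := ⟨by omega⟩
  have hcyc : IsCycleOf β (n - 1) := by
    refine ⟨by omega, fun i => ⟨n - 1 - i.val, by have := ZMod.val_lt i; omega⟩, ?_, ?_⟩
    · intro i j hij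
      apply ZMod.val_injective (n - 1)
      have hi := ZMod.val_lt i
      have hj := ZMod.val_lt j
      rw [Fin.mk.injEq] at hij
      omega
    · intro i
      have hi := ZMod.val_lt i
      have hadd : (i + 1).val = (i.val + 1) % (n - 1) := by
        rw [ZMod.val_add, ZMod.val_one]
      simp only [hβdef]
      by_cases h : i.val = n - 2
      · rw [if_pos ((by omega : n - 1 - i.val ≤ 1) : _)]
        apply Fin.ext
        have h2 : (i + 1).val = 0 := by
          rw [hadd, h, show n - 2 + 1 = n - 1 by omega, Nat.mod_self]
        show (↑(n - 1) : Fin n).val = n - 1 - (i + 1).val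
        rw [cNm, h2]
        omega
      · rw [if_neg ((by omega : ¬ (n - 1 - i.val ≤ 1)) : _)]
        apply Fin.ext
        show n - 1 - i.val - 1 = n - 1 - (i + 1).val
        rw [hadd, Nat.mod_eq_of_lt (by omega)]
        omega
  have h1 : (n - 1) ∈ { k | ∃ α ∈ genSg D, IsCycleOf α k } := ⟨β, hβmem, hcyc⟩
  have hub : ∀ k ∈ { k | ∃ α ∈ genSg D, IsCycleOf α k }, k ≤ n - 1 := by
    rintro k ⟨α, hα, hc⟩
    exact cycle_bound hn (genSg_not_inj hD hα) hc
  show sSup { k | ∃ α ∈ genSg D, IsCycleOf α k } = n - 1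
  exact le_antisymm (csSup_le ⟨n - 1, h1⟩ hub) (le_csSup ⟨n - 1, fun k hk => hub k hk⟩ h1)
end

section
/- If G is a graph and H is a minor of G, and H has at least one edge, then l(H) ≤ l(G). -/
/-- `H` is a minor of `G`: there are disjoint nonempty connected branch sets in `G`,
one for each vertex of `H`, with an edge of `G` between the branch sets of any two
adjacent vertices of `H`. -/
def IsMinorOf {m n : ℕ} (H : SimpleGraph (Fin m)) (G : SimpleGraph (Fin n)) : Prop :=
  ∃ B : Fin m → Set (Fin n),
    (∀ v, (B v).Nonempty) ∧ (∀ v, (G.induce (B v)).Connected) ∧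
    (∀ u v, u ≠ v → Disjoint (B u) (B v)) ∧
    (∀ u v, H.Adj u v → ∃ a ∈ B u, ∃ b ∈ B v, G.Adj a b)


namespace S3
variable {n : ℕ}

def F (L : List (Fin n × Fin n)) : Fin n → Fin n :=
  L.foldl (fun f p => arcT p.1 p.2 ∘ f) id

lemma foldl_comp (L : List (Fin n × Fin n)) (g : Fin n → Fin n) :
    L.foldl (fun f p => arcT p.1 p.2 ∘ f) g = F L ∘ g := by
  induction L generalizing g with
  | nil => rfl
  | cons e L ih =>
      rw [List.foldl_cons, ih]
      conv_rhs => rw [F, List.foldl_cons, ih]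
      rfl

lemma F_cons (e : Fin n × Fin n) (L : List (Fin n × Fin n)) :
    F (e :: L) = F L ∘ arcT e.1 e.2 := by
  show List.foldl _ _ _ = _
  rw [List.foldl_cons, foldl_comp]
  rfl

lemma F_append (L1 L2 : List (Fin n × Fin n)) : F (L1 ++ L2) = F L2 ∘ F L1 := by
  show List.foldl _ _ _ = _
  rw [List.foldl_append, foldl_comp]
  rfl

lemma F_fix {L : List (Fin n × Fin n)} {z : Fin n} (h : ∀ e ∈ L, e.1 ≠ z) :
    F L z = z := by
  induction L with
  | nil => rfl
  | cons e L ih =>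
      rw [F_cons]
      have hz : arcT e.1 e.2 z = z := by
        simp [arcT, (h e (by simp)).symm]
      simp only [Function.comp_apply, hz]
      exact ih fun e' he' => h e' (by simp [he'])

lemma walk_word {G : SimpleGraph (Fin n)} {S : Set (Fin n)} {x y : ↥S}
    (p : (G.induce S).Walk x y) (hp : p.IsPath) :
    ∃ L : List (Fin n × Fin n),
      (∀ e ∈ L, G.Adj e.1 e.2) ∧ (∀ e ∈ L, e.1 ∈ S ∧ e.1 ≠ (y : Fin n)) ∧
      F L (x : Fin n) = y := by
  induction p with
  | nil => exact ⟨[], by simp, by simp, rfl⟩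
  | @cons a c b h q ih =>
      have hq : q.IsPath := hp.of_cons
      have hay : a ≠ b := by
        intro hxy
        exact (SimpleGraph.Walk.cons_isPath_iff _ _ |>.mp hp).2
          (hxy ▸ q.end_mem_support)
      obtain ⟨L, hL1, hL2, hL3⟩ := ih hq
      refine ⟨((a : Fin n), (c : Fin n)) :: L, ?_, ?_, ?_⟩
      · intro e he
        rcases List.mem_cons.mp he with rfl | he
        · exact h
        · exact hL1 e he
      · intro e he
        rcases List.mem_cons.mp he with rfl | he
        · exact ⟨a.2, fun hc => hay (Subtype.ext hc)⟩
        · exact hL2 e he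
      · rw [F_cons]
        simp only [Function.comp_apply]
        have harc : arcT (a : Fin n) (c : Fin n) (a : Fin n) = c := by simp [arcT]
        rw [harc, hL3]

lemma arc_word {G : SimpleGraph (Fin n)} {S T : Set (Fin n)}
    (hS : (G.induce S).Connected) (hT : (G.induce T).Connected)
    {rs rt : Fin n} (hrs : rs ∈ S) (hrt : rt ∈ T)
    (hab : ∃ a ∈ S, ∃ b ∈ T, G.Adj a b) :
    ∃ L : List (Fin n × Fin n), L ≠ [] ∧ (∀ e ∈ L, G.Adj e.1 e.2) ∧
      (∀ e ∈ L, e.1 ∈ S ∨ (e.1 ∈ T ∧ e.1 ≠ rt)) ∧ F L rs = rt := by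
  obtain ⟨a, ha, b, hb, hab⟩ := hab
  obtain ⟨w1⟩ := hS.preconnected ⟨rs, hrs⟩ ⟨a, ha⟩
  obtain ⟨w2⟩ := hT.preconnected ⟨b, hb⟩ ⟨rt, hrt⟩
  obtain ⟨L1, h11, h12, h13⟩ := walk_word w1.toPath.1 w1.toPath.2
  obtain ⟨L2, h21, h22, h23⟩ := walk_word w2.toPath.1 w2.toPath.2
  refine ⟨L1 ++ (a, b) :: L2, by simp, ?_, ?_, ?_⟩
  · intro e he
    rcases List.mem_append.mp he with he | he
    · exact h11 e he
    · rcases List.mem_cons.mp he with rfl | he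
      · exact hab
      · exact h21 e he
  · intro e he
    rcases List.mem_append.mp he with he | he
    · exact Or.inl (h12 e he).1
    · rcases List.mem_cons.mp he with rfl | he
      · exact Or.inl ha
      · exact Or.inr (h22 e he)
  · rw [F_append, Function.comp_apply, h13, F_cons]
    simp only [Function.comp_apply]
    have : arcT a b a = b := by simp [arcT]
    rw [this, h23]

end S3

/-- If `H` is a minor of `G` with at least one edge, then `l(H) ≤ l(G)`. -/
theorem stmt3 {m n : ℕ} (H : SimpleGraph (Fin m)) (G : SimpleGraph (Fin n))
    (hminor : IsMinorOf H G) (hedge : ∃ u v, H.Adj u v) : lG H ≤ lG G := by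
  classical
  obtain ⟨B, hB1, hB2, hB3, hB4⟩ := hminor
  -- representatives
  set r : Fin m → Fin n := fun v => (hB1 v).choose with hr_def
  have hr : ∀ v, r v ∈ B v := fun v => (hB1 v).choose_spec
  have hrinj : Function.Injective r := by
    intro u v huv
    by_contra hne
    exact Set.disjoint_left.mp (hB3 u v hne) (hr u) (huv ▸ hr v)
  -- per-arc simulation
  have harc : ∀ u v : Fin m, H.Adj u v →
      ∃ W : List (Fin n × Fin n), W ≠ [] ∧ (∀ e ∈ W, e ∈ arcsOf G) ∧
        ∀ w, S3.F W (r w) = r (arcT u v w) := by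
    intro u v huv
    obtain ⟨L, hL0, hL1, hL2, hL3⟩ :=
      S3.arc_word (hB2 u) (hB2 v) (hr u) (hr v) (hB4 u v huv)
    refine ⟨L, hL0, fun e he => hL1 e he, ?_⟩
    intro w
    by_cases hw : w = u
    · subst hw
      have : arcT w v w = v := by simp [arcT]
      rw [this, hL3]
    · have h1 : arcT u v w = w := by simp [arcT, hw]
      rw [h1]
      refine S3.F_fix ?_
      intro e he hez
      rcases hL2 e he with h2 | ⟨h2, h3⟩
      · exact Set.disjoint_left.mp (hB3 w u hw) (hr w) (hez ▸ h2)
      · by_cases hwv : w = v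
        · exact h3 (hez.symm ▸ hwv ▸ rfl)
        · exact Set.disjoint_left.mp (hB3 w v hwv) (hr w) (hez ▸ h2)
  -- simulate a whole word
  have hword : ∀ ℓ : List (Fin m × Fin m), (∀ p ∈ ℓ, p ∈ arcsOf H) →
      ∃ W : List (Fin n × Fin n), (ℓ ≠ [] → W ≠ []) ∧ (∀ e ∈ W, e ∈ arcsOf G) ∧
        ∀ w, S3.F W (r w) = r (S3.F ℓ w) := by
    intro ℓ
    induction ℓ with
    | nil => exact fun _ => ⟨[], by simp, by simp, fun w => rfl⟩
    | cons e ℓ ih =>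
        intro hmem
        obtain ⟨W1, hW10, hW11, hW12⟩ :=
          harc e.1 e.2 (hmem e (by simp))
        obtain ⟨W2, _, hW21, hW22⟩ := ih (fun p hp => hmem p (by simp [hp]))
        refine ⟨W1 ++ W2, fun _ => by simp [hW10], ?_, ?_⟩
        · intro e' he'
          rcases List.mem_append.mp he' with h | h
          · exact hW11 e' h
          · exact hW21 e' h
        · intro w
          rw [S3.F_append, Function.comp_apply, hW12, hW22, S3.F_cons,
            Function.comp_apply]
  -- transfer cycles
  have key : ∀ k, k ∈ {k | ∃ α ∈ genSg (arcsOf H), IsCycleOf α k} →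
      k ∈ {k | ∃ α ∈ genSg (arcsOf G), IsCycleOf α k} := by
    rintro k ⟨α, ⟨ℓ, hℓne, hℓmem, rfl⟩, hkpos, a, hainj, hacyc⟩
    obtain ⟨W, hW0, hW1, hW2⟩ := hword ℓ hℓmem
    refine ⟨S3.F W, ⟨W, hW0 hℓne, hW1, rfl⟩, hkpos, r ∘ a, hrinj.comp hainj, ?_⟩
    intro i
    have := hW2 (a i)
    simp only [Function.comp_apply]
    rw [this]
    congr 1
    exact hacyc i
  -- bounds
  have hbdd : BddAbove {k | ∃ α ∈ genSg (arcsOf G), IsCycleOf α k} := by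
    refine ⟨n, ?_⟩
    rintro k ⟨α, _, hkpos, a, hainj, _⟩
    haveI : NeZero k := ⟨hkpos.ne'⟩
    calc k = Fintype.card (ZMod k) := (ZMod.card k).symm
      _ ≤ Fintype.card (Fin n) := Fintype.card_le_of_injective a hainj
      _ = n := Fintype.card_fin n
  have hne : {k | ∃ α ∈ genSg (arcsOf H), IsCycleOf α k}.Nonempty := by
    obtain ⟨u, v, huv⟩ := hedge
    refine ⟨1, [(u, v)].foldl (fun f p => arcT p.1 p.2 ∘ f) id,
      ⟨[(u, v)], by simp, by simpa [arcsOf] using huv, rfl⟩,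
      Nat.one_pos, fun _ => v, fun i j _ => Subsingleton.elim i j, ?_⟩
    intro i
    show (arcT u v ∘ id) v = v
    simp [arcT, huv.ne']
  exact csSup_le_csSup hbdd hne key
end

section
/- Let G be a graph. Then: (i) if G has a vertex of degree k with k≥2, then l(G) ≥ k−1; (ii) if G contains a subgraph that is a tree with k leaves, where k≥2, then l(G) ≥ k−1. -/
section Aux
variable {n : ℕ}

lemma arcT_self (a b : Fin n) : arcT a b a = b := by simp [arcT]

lemma arcT_ne {a b v : Fin n} (h : v ≠ a) : arcT a b v = v := by simp [arcT, h]

lemma foldl_step (l : List (Fin n × Fin n)) (a : Fin n → Fin n) :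
    l.foldl (fun f p => arcT p.1 p.2 ∘ f) a =
      (l.foldl (fun f p => arcT p.1 p.2 ∘ f) id) ∘ a := by
  induction l generalizing a with
  | nil => simp
  | cons p l ih =>
    simp only [List.foldl_cons]
    rw [ih, ih (arcT p.1 p.2 ∘ id)]
    ext z; simp [Function.comp]

lemma arcT_mem {D : Set (Fin n × Fin n)} {a b : Fin n} (h : (a, b) ∈ D) :
    arcT a b ∈ genSg D := by
  refine ⟨[(a, b)], by simp, by simpa using h, ?_⟩
  simp

lemma genSg_comp {D : Set (Fin n × Fin n)} {f g : Fin n → Fin n}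
    (hf : f ∈ genSg D) (hg : g ∈ genSg D) : g ∘ f ∈ genSg D := by
  obtain ⟨l1, h1, h1D, rfl⟩ := hf
  obtain ⟨l2, h2, h2D, rfl⟩ := hg
  refine ⟨l1 ++ l2, by simp [h1], ?_, ?_⟩
  · intro p hp; rcases List.mem_append.mp hp with h | h
    · exact h1D p h
    · exact h2D p h
  · rw [List.foldl_append, foldl_step l2 (List.foldl (fun f p => arcT p.1 p.2 ∘ f) id l1)]

lemma le_lD {D : Set (Fin n × Fin n)} {α : Fin n → Fin n} (hα : α ∈ genSg D)
    {m : ℕ} (hc : IsCycleOf α m) : m ≤ lD D := by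
  apply le_csSup
  · refine ⟨n, fun k hk => ?_⟩
    obtain ⟨β, _, hk0, a, ha, _⟩ := hk
    haveI : NeZero k := ⟨hk0.ne'⟩
    have := Fintype.card_le_of_injective a ha
    simpa [ZMod.card] using this
  · exact ⟨α, hα, hc⟩

end Aux
section Main
variable {n : ℕ}

lemma main_cycle (D : Set (Fin n × Fin n)) (k : ℕ) (hk : 2 ≤ k)
    (x : ℕ → Fin n) (hx : ∀ i < k, ∀ j < k, x i = x j → i = j)
    (Int : Set (Fin n)) (hI : ∀ i < k, x i ∉ Int)
    (hs : ∀ i < k, ∀ j < k, i ≠ j → ∃ f ∈ genSg D, f (x i) = x j ∧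
        ∀ z, z ≠ x i → z ∉ Int → f z = z) :
    ∃ α ∈ genSg D, IsCycleOf α (k - 1) := by
  set m := k - 1 with hm
  have hm1 : 1 ≤ m := by omega
  have hmk : m < k := by omega
  -- composite of the first t sweeps
  have key : ∀ t, t ≤ m - 1 → ∃ g : Fin n → Fin n,
      (g = id ∨ g ∈ genSg D) ∧
      (∀ s < t, g (x (m - 2 - s)) = x (m - 1 - s)) ∧
      (∀ z, z ∉ Int → (∀ s < t, z ≠ x (m - 2 - s)) → g z = z) := by
    intro t
    induction t with
    | zero =>
      exact fun _ => ⟨id, Or.inl rfl, fun s hs => by omega, fun z _ _ => rfl⟩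
    | succ t ih =>
      intro ht
      obtain ⟨g, hg, hg1, hg2⟩ := ih (by omega)
      obtain ⟨f, hf, hf1, hf2⟩ := hs (m - 2 - t) (by omega) (m - 1 - t) (by omega) (by omega)
      refine ⟨f ∘ g, ?_, ?_, ?_⟩
      · rcases hg with rfl | hg
        · right; simpa using hf
        · exact Or.inr (genSg_comp hg hf)
      · intro s hst
        rcases Nat.lt_succ_iff_lt_or_eq.mp hst with hst | rfl
        · have h1 : g (x (m - 2 - s)) = x (m - 1 - s) := hg1 s hst
          have hne : x (m - 1 - s) ≠ x (m - 2 - t) := by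
            intro h
            have := hx (m - 1 - s) (by omega) (m - 2 - t) (by omega) h
            omega
          simp only [Function.comp_apply, h1]
          exact hf2 _ hne (hI (m - 1 - s) (by omega))
        · have h1 : g (x (m - 2 - s)) = x (m - 2 - s) := by
            refine hg2 _ (hI _ (by omega)) ?_
            intro s' hs' h
            have := hx (m - 2 - s) (by omega) (m - 2 - s') (by omega) h
            omega
          simp only [Function.comp_apply, h1]
          exact hf1
      · intro z hz hz2
        have h1 : g z = z := hg2 z hz (fun s hst => hz2 s (by omega))
        simp only [Function.comp_apply, h1]
        exact hf2 z (hz2 t (by omega)) hz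
  obtain ⟨g, hg, hg1, hg2⟩ := key (m - 1) le_rfl
  obtain ⟨fp, hfp, hfp1, hfp2⟩ := hs (m - 1) (by omega) m (by omega) (by omega)
  obtain ⟨fr, hfr, hfr1, hfr2⟩ := hs m (by omega) 0 (by omega) (by omega)
  -- the images of the cycle points
  have himg : ∀ j < m, (fr ∘ g ∘ fp) (x j) = x ((j + 1) % m) := by
    intro j hj
    rcases Nat.lt_or_ge j (m - 1) with hjm | hjm
    · -- j ≤ m - 2
      have h1 : fp (x j) = x j := by
        refine hfp2 _ ?_ (hI _ (by omega))
        intro h; have := hx j (by omega) (m - 1) (by omega) h; omega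
      have h2 : g (x j) = x (j + 1) := by
        have := hg1 (m - 2 - j) (by omega)
        have e1 : m - 2 - (m - 2 - j) = j := by omega
        have e2 : m - 1 - (m - 2 - j) = j + 1 := by omega
        rw [e1, e2] at this; exact this
      have h3 : fr (x (j + 1)) = x (j + 1) := by
        refine hfr2 _ ?_ (hI _ (by omega))
        intro h; have := hx (j + 1) (by omega) m (by omega) h; omega
      have hmod : (j + 1) % m = j + 1 := Nat.mod_eq_of_lt (by omega)
      simp only [Function.comp_apply, h1, h2, h3, hmod]
    · -- j = m - 1
      have hj1 : j = m - 1 := by omega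
      subst hj1
      have h2 : g (x m) = x m := by
        refine hg2 _ (hI _ (by omega)) ?_
        intro s hst h
        have := hx m (by omega) (m - 2 - s) (by omega) h
        omega
      have hmod : (m - 1 + 1) % m = 0 := by
        have : m - 1 + 1 = m := by omega
        rw [this, Nat.mod_self]
      simp only [Function.comp_apply, hfp1, h2, hfr1, hmod]
  refine ⟨fr ∘ g ∘ fp, ?_, ?_⟩
  · rcases hg with rfl | hg
    · have : fr ∘ id ∘ fp = fr ∘ fp := rfl
      rw [this]; exact genSg_comp hfp hfr
    · exact genSg_comp (genSg_comp hfp hg) hfr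
  · haveI : NeZero m := ⟨by omega⟩
    refine ⟨by omega, fun i => x i.val, ?_, ?_⟩
    · intro i j h
      have hi : i.val < m := ZMod.val_lt i
      have hj : j.val < m := ZMod.val_lt j
      have := hx i.val (by omega) j.val (by omega) h
      exact ZMod.val_injective m this
    · intro i
      have hi : i.val < m := ZMod.val_lt i
      have hval : (i + 1).val = (i.val + 1) % m := by
        rw [ZMod.val_add, ZMod.val_one_eq_one_mod, Nat.add_mod_mod]
      show (fr ∘ g ∘ fp) (x i.val) = x ((i + 1).val)
      rw [hval]
      exact himg i.val hi

end Main
section Extract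
variable {n : ℕ}

lemma exists_enum {k : ℕ} (hk : 0 < k) {s : Set (Fin n)} (h : s.ncard = k) :
    ∃ x : ℕ → Fin n, (∀ i < k, x i ∈ s) ∧ (∀ i < k, ∀ j < k, x i = x j → i = j) := by
  have hfin : s.Finite := s.toFinite
  have hcard : hfin.toFinset.card = k := by
    rw [← Set.ncard_eq_toFinset_card s hfin]; exact h
  let e := hfin.toFinset.equivFinOfCardEq hcard
  refine ⟨fun i => (e.symm ⟨i % k, Nat.mod_lt _ hk⟩ : Fin n), ?_, ?_⟩
  · intro i _
    have := (e.symm ⟨i % k, Nat.mod_lt _ hk⟩).2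
    rwa [Set.Finite.mem_toFinset] at this
  · intro i hi j hj hij
    have h1 : e.symm ⟨i % k, Nat.mod_lt _ hk⟩ = e.symm ⟨j % k, Nat.mod_lt _ hk⟩ :=
      Subtype.ext hij
    have h2 := e.symm.injective h1
    have h3 : i % k = j % k := congrArg Fin.val h2
    rwa [Nat.mod_eq_of_lt hi, Nat.mod_eq_of_lt hj] at h3

lemma part_i {G : SimpleGraph (Fin n)} (v : Fin n) (k : ℕ) (hk : 2 ≤ k)
    (hdeg : (G.neighborSet v).ncard = k) : k - 1 ≤ lG G := by
  obtain ⟨x, hxs, hxi⟩ := exists_enum (by omega) hdeg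
  have hadj : ∀ i < k, G.Adj v (x i) := fun i hi => hxs i hi
  have hIv : ∀ i < k, x i ∉ ({v} : Set (Fin n)) := by
    intro i hi h
    rw [Set.mem_singleton_iff] at h
    exact G.irrefl (h ▸ hadj i hi)
  have hs : ∀ i < k, ∀ j < k, i ≠ j → ∃ f ∈ genSg (arcsOf G), f (x i) = x j ∧
      ∀ z, z ≠ x i → z ∉ ({v} : Set (Fin n)) → f z = z := by
    intro i hi j hj hij
    refine ⟨arcT v (x j) ∘ arcT (x i) v, ?_, ?_, ?_⟩
    · exact genSg_comp (arcT_mem ((hadj i hi).symm : G.Adj (x i) v)) (arcT_mem (hadj j hj))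
    · simp only [Function.comp_apply, arcT_self]
    · intro z hz1 hz2
      rw [Set.mem_singleton_iff] at hz2
      simp only [Function.comp_apply, arcT_ne hz1, arcT_ne hz2]
  obtain ⟨α, hα, hc⟩ := main_cycle (arcsOf G) k hk x hxi {v} hIv hs
  exact le_lD hα hc

end Extract
section Tree
variable {n : ℕ}

open SimpleGraph

lemma two_nbrs {V : Type*} {Γ : SimpleGraph V} {a b : V} (p : Γ.Walk a b)
    (hp : p.IsPath) (c : V) (hc : c ∈ p.support) (hca : c ≠ a) (hcb : c ≠ b) :
    ∃ d e, d ≠ e ∧ Γ.Adj c d ∧ Γ.Adj c e := by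
  induction p with
  | nil => simp at hc; exact absurd hc hca
  | @cons a w b h q ih =>
    rw [Walk.support_cons, List.mem_cons] at hc
    rcases hc with rfl | hc
    · exact absurd rfl hca
    · have hq : q.IsPath := ((Walk.cons_isPath_iff h q).mp hp).1
      have hanq : a ∉ q.support := ((Walk.cons_isPath_iff h q).mp hp).2
      by_cases hcw : c = w
      · subst hcw
        cases q with
        | nil => exact absurd rfl hcb
        | @cons w t b h2 q' =>
          refine ⟨a, t, ?_, h.symm, h2⟩
          intro hat
          apply hanq
          rw [hat, Walk.support_cons]
          exact List.mem_cons_of_mem _ q'.start_mem_support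
      · exact ih hq hc hcw hcb

lemma slide_of_walk {G : SimpleGraph (Fin n)} {H : G.Subgraph}
    {a b : H.verts} (p : H.coe.Walk a b) (hab : a ≠ b) :
    ∃ f ∈ genSg (arcsOf G), f a.val = b.val ∧
      ∀ z : Fin n, (∀ c ∈ p.support, c ≠ b → z ≠ c.val) → f z = z := by
  induction p with
  | nil => exact absurd rfl hab
  | @cons a w b h q ih =>
    have hGa : G.Adj a.val w.val := H.adj_sub h
    by_cases hwb : w = b
    · subst hwb
      refine ⟨arcT a.val w.val, arcT_mem hGa, arcT_self _ _, ?_⟩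
      intro z hz
      exact arcT_ne (hz a (Walk.start_mem_support _) hab)
    · obtain ⟨f, hf, hf1, hf2⟩ := ih hwb
      refine ⟨f ∘ arcT a.val w.val, genSg_comp (arcT_mem hGa) hf, ?_, ?_⟩
      · simp only [Function.comp_apply, arcT_self, hf1]
      · intro z hz
        have h1 : arcT a.val w.val z = z :=
          arcT_ne (hz a (Walk.start_mem_support _) hab)
        simp only [Function.comp_apply, h1]
        refine hf2 z ?_
        intro c hc hcb
        exact hz c (by rw [Walk.support_cons]; exact List.mem_cons_of_mem _ hc) hcb

lemma part_ii {G : SimpleGraph (Fin n)} (H : G.Subgraph) (k : ℕ) (hk : 2 ≤ k)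
    (htree : H.coe.IsTree)
    (hleaf : { v : Fin n | v ∈ H.verts ∧ (H.neighborSet v).ncard = 1 }.ncard = k) :
    k - 1 ≤ lG G := by
  obtain ⟨x, hxs, hxi⟩ := exists_enum (by omega) hleaf
  set Int : Set (Fin n) := {w | w ∈ H.verts ∧ (H.neighborSet w).ncard ≠ 1} with hInt
  have hIv : ∀ i < k, x i ∉ Int := by
    intro i hi h
    exact h.2 (hxs i hi).2
  have hs : ∀ i < k, ∀ j < k, i ≠ j → ∃ f ∈ genSg (arcsOf G), f (x i) = x j ∧
      ∀ z, z ≠ x i → z ∉ Int → f z = z := by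
    intro i hi j hj hij
    have hu : x i ∈ H.verts := (hxs i hi).1
    have hv : x j ∈ H.verts := (hxs j hj).1
    set a : H.verts := ⟨x i, hu⟩
    set b : H.verts := ⟨x j, hv⟩
    have hab : a ≠ b := by
      intro h
      exact hij (hxi i hi j hj (congrArg Subtype.val h))
    obtain ⟨w⟩ := htree.isConnected.preconnected a b
    obtain ⟨p, hp⟩ := w.toPath
    obtain ⟨f, hf, hf1, hf2⟩ := slide_of_walk p hab
    refine ⟨f, hf, hf1, ?_⟩
    intro z hz1 hz2
    refine hf2 z ?_
    intro c hc hcb hzc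
    by_cases hca : c = a
    · exact hz1 (by rw [hzc, hca])
    · apply hz2
      rw [hzc, hInt]
      refine ⟨c.2, ?_⟩
      obtain ⟨d, e, hde, hd, he⟩ := two_nbrs p hp c hc hca hcb
      intro h1
      obtain ⟨w0, hw0⟩ := Set.ncard_eq_one.mp h1
      have hd' : d.val ∈ H.neighborSet c.val := hd
      have he' : e.val ∈ H.neighborSet c.val := he
      rw [hw0] at hd' he'
      exact hde (Subtype.ext (hd'.trans he'.symm))
  obtain ⟨α, hα, hc⟩ := main_cycle (arcsOf G) k hk x hxi Int hIv hs
  exact le_lD hα hc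

end Tree


/-- (i) A vertex of degree `k ≥ 2` gives `l(G) ≥ k - 1`.
(ii) A subgraph which is a tree with `k ≥ 2` leaves gives `l(G) ≥ k - 1`. -/
theorem stmt4 (n : ℕ) (G : SimpleGraph (Fin n)) :
    (∀ (v : Fin n) (k : ℕ), 2 ≤ k → (G.neighborSet v).ncard = k → k - 1 ≤ lG G) ∧
    (∀ (H : G.Subgraph) (k : ℕ), 2 ≤ k → H.coe.IsTree →
      { v : Fin n | v ∈ H.verts ∧ (H.neighborSet v).ncard = 1 }.ncard = k →
      k - 1 ≤ lG G) := by
  exact ⟨fun v k hk h => part_i v k hk h, fun H k hk ht hl => part_ii H k hk ht hl⟩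
end

section
/- Let G be a connected graph with t vertices of degree not equal to 2. Then l(G) ≥ (t−2)/4 + 1. -/
namespace Stmt5

variable {n : ℕ}

/-- fold of a word -/
def Fw (w : List (Fin n × Fin n)) : Fin n → Fin n :=
  w.foldl (fun f p => arcT p.1 p.2 ∘ f) id

lemma foldl_from (w : List (Fin n × Fin n)) (g : Fin n → Fin n) :
    w.foldl (fun f p => arcT p.1 p.2 ∘ f) g = Fw w ∘ g := by
  induction w generalizing g with
  | nil => rfl
  | cons p w ih =>
    show w.foldl _ (arcT p.1 p.2 ∘ g) = _
    rw [ih (arcT p.1 p.2 ∘ g)]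
    have : Fw (p :: w) = Fw w ∘ arcT p.1 p.2 := by
      show (p :: w).foldl _ id = _
      rw [List.foldl_cons, ih (arcT p.1 p.2 ∘ id)]
      rfl
    rw [this]
    rfl

lemma Fw_cons (p : Fin n × Fin n) (w : List (Fin n × Fin n)) :
    Fw (p :: w) = Fw w ∘ arcT p.1 p.2 := by
  show (p :: w).foldl _ id = _
  rw [List.foldl_cons, foldl_from]
  rfl

lemma Fw_append (w₁ w₂ : List (Fin n × Fin n)) :
    Fw (w₁ ++ w₂) = Fw w₂ ∘ Fw w₁ := by
  show (w₁ ++ w₂).foldl _ id = _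
  rw [List.foldl_append, foldl_from]
  rfl

lemma Fw_mem_genSg {D : Set (Fin n × Fin n)} {w : List (Fin n × Fin n)}
    (hne : w ≠ []) (hmem : ∀ p ∈ w, p ∈ D) : Fw w ∈ genSg D :=
  ⟨w, hne, hmem, rfl⟩

/-- the word of arcs along a path -/
def pathWord : List (Fin n) → List (Fin n × Fin n)
  | [] => []
  | [_] => []
  | a :: b :: l => (a, b) :: pathWord (b :: l)

lemma mem_pathWord_adj {G : SimpleGraph (Fin n)} :
    ∀ {l : List (Fin n)}, l.Chain' G.Adj → ∀ p ∈ pathWord l, p ∈ arcsOf G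
  | [], _, p, hp => by simp [pathWord] at hp
  | [_], _, p, hp => by simp [pathWord] at hp
  | a :: b :: l, hch, p, hp => by
    rw [pathWord] at hp
    rcases List.mem_cons.1 hp with h | h
    · subst h; exact (List.isChain_cons_cons.1 hch).1
    · exact mem_pathWord_adj (List.isChain_cons_cons.1 hch).2 p h

lemma pathWord_ne_nil {l : List (Fin n)} (h : 2 ≤ l.length) : pathWord l ≠ [] := by
  match l, h with
  | a :: b :: l, _ => rw [pathWord]; simp

/-- transport: the fold of a path word carries the head to the last element -/
lemma Fw_pathWord_head :
    ∀ {l : List (Fin n)} {a b : Fin n}, l.head? = some a → l.getLast? = some b →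
      Fw (pathWord l) a = b
  | [], a, b, ha, _ => by simp at ha
  | [x], a, b, ha, hb => by
    simp at ha hb
    subst ha hb
    rfl
  | x :: y :: l, a, b, ha, hb => by
    simp only [List.head?_cons, Option.some.injEq] at ha
    rw [pathWord, Fw_cons]
    have h1 : arcT x y a = y := by simp [arcT, ha]
    simp only [Function.comp_apply, h1]
    refine Fw_pathWord_head (by simp) ?_
    rw [← hb, List.getLast?_cons_cons]

/-- points not among the sources are fixed -/
lemma Fw_pathWord_fix :
    ∀ {l : List (Fin n)} {z : Fin n}, z ∉ l.dropLast → Fw (pathWord l) z = z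
  | [], z, _ => rfl
  | [_], z, _ => rfl
  | x :: y :: l, z, hz => by
    rw [List.dropLast_cons₂, List.mem_cons] at hz
    push_neg at hz
    rw [pathWord, Fw_cons]
    have : arcT x y z = z := by simp [arcT, hz.1]
    simp only [Function.comp_apply, this]
    exact Fw_pathWord_fix hz.2


variable {G : SimpleGraph (Fin n)}

/-- The words `W P k c`: concatenation of path words for indices `k-1, k-2, …, k-c`. -/
def Wrd (P : ℕ → List (Fin n)) (k : ℕ) : ℕ → List (Fin n × Fin n)
  | 0 => []
  | c + 1 => Wrd P k c ++ pathWord (P (k - 1 - c))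

lemma evalW (k : ℕ) (hk : 1 ≤ k) (x : ℕ → Fin n)
    (hinj : ∀ i ≤ k, ∀ j ≤ k, x i = x j → i = j)
    (P : ℕ → List (Fin n))
    (hhd : ∀ j ≤ k, (P j).head? = some (x j))
    (hlt : ∀ j ≤ k, (P j).getLast? = some (x (if j = k then 0 else j + 1)))
    (hdp : ∀ j ≤ k, ∀ v ∈ (P j).dropLast, ∀ i ≤ k, v = x i → i = j) :
    ∀ c ≤ k, ∀ i ≤ k,
      Fw (Wrd P k c) (x i) = x (if k - c ≤ i ∧ i ≤ k - 1 then i + 1 else i) := by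
  intro c
  induction c with
  | zero =>
    intro _ i hi
    have : ¬ (k - 0 ≤ i ∧ i ≤ k - 1) := by omega
    rw [if_neg this]
    rfl
  | succ c ih =>
    intro hc i hi
    set j₀ := k - 1 - c with hj₀
    have hj₀k : j₀ ≤ k := by omega
    have hWs : Fw (Wrd P k (c+1)) = Fw (pathWord (P j₀)) ∘ Fw (Wrd P k c) := by
      rw [Wrd, Fw_append]
    rw [hWs]
    simp only [Function.comp_apply]
    rw [ih (by omega) i hi]
    set i' := if k - c ≤ i ∧ i ≤ k - 1 then i + 1 else i with hi'
    have hi'k : i' ≤ k := by rw [hi']; split <;> omega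
    by_cases hij : i = j₀
    · -- transport
      have hii' : i' = j₀ := by rw [hi']; split <;> omega
      rw [hii']
      have := Fw_pathWord_head (hhd j₀ hj₀k) (hlt j₀ hj₀k)
      rw [this, if_neg (by omega), if_pos (by omega)]
      congr 1
      omega
    · -- fix
      have hnotin : x i' ∉ (P j₀).dropLast := by
        intro hmem
        have := hdp j₀ hj₀k (x i') hmem i' hi'k rfl
        rw [hi'] at this
        split at this <;> omega
      rw [Fw_pathWord_fix hnotin]
      congr 1
      rw [hi']
      by_cases h1 : k - (c+1) ≤ i ∧ i ≤ k - 1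
      · rw [if_pos h1]
        split
        · rfl
        · omega
      · rw [if_neg h1]
        split
        · omega
        · rfl

lemma Wrd_mem (P : ℕ → List (Fin n)) (k : ℕ)
    (hch : ∀ j ≤ k, (P j).Chain' G.Adj) :
    ∀ c ≤ k, ∀ p ∈ Wrd P k c, p ∈ arcsOf G := by
  intro c
  induction c with
  | zero => intro _ p hp; simp [Wrd] at hp
  | succ c ih =>
    intro hc p hp
    rw [Wrd, List.mem_append] at hp
    rcases hp with h | h
    · exact ih (by omega) p h
    · exact mem_pathWord_adj (hch _ (by omega)) p h

/-- From a rotation witness to an element of the semigroup with a `k`-cycle. -/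
theorem rot_witness (k : ℕ) (hk : 1 ≤ k) (x : ℕ → Fin n)
    (hinj : ∀ i ≤ k, ∀ j ≤ k, x i = x j → i = j)
    (P : ℕ → List (Fin n))
    (hch : ∀ j ≤ k, (P j).Chain' G.Adj)
    (hhd : ∀ j ≤ k, (P j).head? = some (x j))
    (hlt : ∀ j ≤ k, (P j).getLast? = some (x (if j = k then 0 else j + 1)))
    (hdp : ∀ j ≤ k, ∀ v ∈ (P j).dropLast, ∀ i ≤ k, v = x i → i = j) :
    ∃ α ∈ genSg (arcsOf G), IsCycleOf α k := by
  classical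
  set Ω : List (Fin n × Fin n) := Wrd P k k ++ pathWord (P k) with hΩ
  have hPk2 : 2 ≤ (P k).length := by
    rcases hPk : P k with _ | ⟨a, _ | ⟨b, l⟩⟩
    · have := hhd k le_rfl; rw [hPk] at this; simp at this
    · have h1 := hhd k le_rfl; have h2 := hlt k le_rfl
      rw [hPk] at h1 h2
      simp at h1 h2
      have := hinj k le_rfl 0 (by omega) (by rw [← h1, ← h2])
      omega
    · simp
  have hαval : ∀ i ≤ k - 1, Fw Ω (x i) = x (if i = k - 1 then 0 else i + 1) := by
    intro i hi
    rw [hΩ, Fw_append]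
    simp only [Function.comp_apply]
    rw [evalW k hk x hinj P hhd hlt hdp k le_rfl i (by omega), if_pos (by omega)]
    by_cases hik : i = k - 1
    · have : i + 1 = k := by omega
      rw [this]
      rw [Fw_pathWord_head (hhd k le_rfl) (hlt k le_rfl), if_pos rfl, if_pos hik]
    · have hnotin : x (i+1) ∉ (P k).dropLast := by
        intro hmem
        have := hdp k le_rfl (x (i+1)) hmem (i+1) (by omega) rfl
        omega
      rw [Fw_pathWord_fix hnotin, if_neg hik]
  refine ⟨Fw Ω, ?_, ?_⟩
  · refine Fw_mem_genSg ?_ ?_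
    · rw [hΩ]
      intro hcon
      have := List.append_eq_nil_iff.1 hcon
      exact (pathWord_ne_nil hPk2) this.2
    · intro p hp
      rw [hΩ, List.mem_append] at hp
      rcases hp with h | h
      · exact Wrd_mem P k hch k le_rfl p h
      · exact mem_pathWord_adj (hch k le_rfl) p h
  · refine ⟨by omega, ?_⟩
    haveI : NeZero k := ⟨by omega⟩
    refine ⟨fun z => x z.val, ?_, ?_⟩
    · intro z₁ z₂ hz
      have h1 : z₁.val < k := ZMod.val_lt z₁
      have h2 : z₂.val < k := ZMod.val_lt z₂
      have := hinj z₁.val (by omega) z₂.val (by omega) hz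
      exact ZMod.val_injective k this
    · intro z
      have hzl : z.val < k := ZMod.val_lt z
      have h1 : Fw Ω (x z.val) = x (if z.val = k - 1 then 0 else z.val + 1) :=
        hαval z.val (by omega)
      rw [h1]
      have hz1 : (z + 1).val = (z.val + 1) % k := by
        conv_lhs => rw [← ZMod.natCast_zmod_val z]
        rw [← Nat.cast_one, ← Nat.cast_add, ZMod.val_natCast]
      have hz2 : (z + 1).val = if z.val = k - 1 then 0 else z.val + 1 := by
        rw [hz1]
        by_cases hzk : z.val = k - 1
        · rw [if_pos hzk]
          have : z.val + 1 = k := by omega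
          rw [this, Nat.mod_self]
        · rw [if_neg hzk]
          exact Nat.mod_eq_of_lt (by omega)
      show _ = x ((z+1).val)
      rw [hz2]


lemma le_lG {k : ℕ} (h : ∃ α ∈ genSg (arcsOf G), IsCycleOf α k) : k ≤ lG G := by
  have hbdd : BddAbove { k | ∃ α ∈ genSg (arcsOf G), IsCycleOf α k } := by
    refine ⟨n, ?_⟩
    rintro k' ⟨α, -, hpos, a, hainj, -⟩
    haveI : NeZero k' := ⟨by omega⟩
    have := Fintype.card_le_of_injective a hainj
    rwa [ZMod.card, Fintype.card_fin] at this
  exact le_csSup hbdd h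

/-- rotation witness of size 1 from a single edge -/
lemma one_le_lG {u v : Fin n} (huv : G.Adj u v) : 1 ≤ lG G := by
  refine le_lG (rot_witness 1 le_rfl
    (fun i => if i = 0 then u else v) ?_ (fun j => if j = 0 then [u, v] else [v, u])
    ?_ ?_ ?_ ?_)
  · intro i hi j hj hx
    interval_cases i <;> interval_cases j <;> simp at hx ⊢
    · exact absurd hx huv.ne
    · exact absurd hx huv.ne'
  · intro j hj
    interval_cases j <;> simp [List.isChain_cons_cons]
    · exact (List.isChain_cons_cons.2 ⟨huv, List.isChain_singleton _⟩ : List.IsChain _ _)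
    · exact (List.isChain_cons_cons.2 ⟨huv.symm, List.isChain_singleton _⟩ : List.IsChain _ _)
  · intro j hj; interval_cases j <;> simp
  · intro j hj; interval_cases j <;> simp
  · intro j hj v' hv' i hi
    interval_cases j <;> simp at hv' <;> subst hv' <;> interval_cases i <;> simp <;>
      intro h <;>
      first
        | exact absurd h huv.ne | exact absurd h huv.ne'
        | exact absurd h.symm huv.ne | exact absurd h.symm huv.ne' 


/-! ### Part C: the boundary growth process -/

variable (G) in
/-- special vertices: degree ≠ 2 -/
def spc : Set (Fin n) := {v | (G.neighborSet v).ncard ≠ 2}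

variable (G) in
/-- boundary of a set -/
def bd (C : Set (Fin n)) : Set (Fin n) := {y | y ∉ C ∧ ∃ c ∈ C, G.Adj c y}

variable (G) in
def cov (C : Set (Fin n)) : Set (Fin n) := C ∪ bd G C

variable (G) in
def outS (C : Set (Fin n)) (y : Fin n) : Set (Fin n) := G.neighborSet y \ cov G C

variable (G) in
def liv (C : Set (Fin n)) : Set (Fin n) := {y | y ∈ bd G C ∧ (outS G C y).Nonempty}

variable (G) in
noncomputable def phi (C : Set (Fin n)) : ℤ :=
  4 * ((bd G C).ncard : ℤ) - ((spc G ∩ cov G C).ncard : ℤ) - ((liv G C).ncard : ℤ)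

variable (G) in
def conn (C : Set (Fin n)) : Prop :=
  C.Nonempty ∧ ∀ a ∈ C, ∀ b ∈ C,
    Relation.ReflTransGen (fun p q => G.Adj p q ∧ p ∈ C ∧ q ∈ C) a b

lemma bd_subset_cov {C : Set (Fin n)} : bd G C ⊆ cov G C := Set.subset_union_right

lemma subset_cov {C : Set (Fin n)} : C ⊆ cov G C := Set.subset_union_left

lemma outS_disj_cov {C : Set (Fin n)} {y : Fin n} : Disjoint (outS G C y) (cov G C) :=
  Set.disjoint_left.2 fun _ hz => hz.2

lemma conn_insert {C : Set (Fin n)} {u : Fin n} (hC : conn G C) (hu : u ∈ bd G C) :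
    conn G (insert u C) := by
  obtain ⟨hne, hrtg⟩ := hC
  obtain ⟨hnotin, c₀, hc₀, hadj⟩ := hu
  set r := fun p q => G.Adj p q ∧ p ∈ insert u C ∧ q ∈ insert u C with hr
  have hsym : Symmetric r := fun p q h => ⟨h.1.symm, h.2.2, h.2.1⟩
  have hmono : ∀ a b, Relation.ReflTransGen
      (fun p q => G.Adj p q ∧ p ∈ C ∧ q ∈ C) a b → Relation.ReflTransGen r a b := by
    intro a b h
    exact Relation.ReflTransGen.lift id
      (fun p q hpq => (⟨hpq.1, Set.mem_insert_of_mem _ hpq.2.1, Set.mem_insert_of_mem _ hpq.2.2⟩ : r p q)) _ _ h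
  have hcu : ∀ b ∈ C, Relation.ReflTransGen r u b := by
    intro b hb
    exact Relation.ReflTransGen.head
      ⟨hadj.symm, Set.mem_insert _ _, Set.mem_insert_of_mem _ hc₀⟩ (hmono _ _ (hrtg c₀ hc₀ b hb))
  refine ⟨⟨u, Set.mem_insert _ _⟩, ?_⟩
  rintro a (rfl | ha) b (rfl | hb)
  · exact Relation.ReflTransGen.refl
  · exact hcu b hb
  · haveI : Std.Symm r := ⟨fun a b h => hsym h⟩
    exact Std.Symm.symm _ _ (hcu a ha)
  · exact hmono _ _ (hrtg a ha b hb)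

/-- Key identity: the boundary after inserting a boundary vertex. -/
lemma bd_insert {C : Set (Fin n)} {u : Fin n} (hu : u ∈ bd G C) :
    bd G (insert u C) = (bd G C \ {u}) ∪ outS G C u := by
  ext y
  constructor
  · rintro ⟨hynot, c, hc, hadj⟩
    have hyu : y ≠ u := fun h => hynot (h ▸ Set.mem_insert _ _)
    have hyC : y ∉ C := fun h => hynot (Set.mem_insert_of_mem _ h)
    rcases Set.mem_insert_iff.1 hc with rfl | hcC
    · -- c = u
      by_cases hycov : y ∈ cov G C
      · rcases hycov with h | h
        · exact absurd h hyC
        · exact Or.inl ⟨h, hyu⟩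
      · exact Or.inr ⟨hadj, hycov⟩
    · exact Or.inl ⟨⟨hyC, c, hcC, hadj⟩, hyu⟩
  · rintro (⟨⟨hyC, c, hc, hadj⟩, hyu⟩ | ⟨hyN, hycov⟩)
    · refine ⟨?_, c, Set.mem_insert_of_mem _ hc, hadj⟩
      rintro (rfl | h)
      · exact hyu rfl
      · exact hyC h
    · have hadj : G.Adj u y := hyN
      refine ⟨?_, u, Set.mem_insert _ _, hadj⟩
      rintro (rfl | h)
      · exact G.irrefl hadj
      · exact hycov (subset_cov h)

lemma cov_insert {C : Set (Fin n)} {u : Fin n} (hu : u ∈ bd G C) :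
    cov G (insert u C) = cov G C ∪ outS G C u := by
  rw [cov, bd_insert hu]
  ext y
  simp only [Set.mem_union, Set.mem_insert_iff, Set.mem_diff, Set.mem_singleton_iff, cov]
  constructor
  · rintro ((rfl | h) | ⟨⟨h, -⟩ | h⟩)
    · exact Or.inl (Or.inr hu)
    · exact Or.inl (Or.inl h)
    · exact Or.inl (Or.inr h)
    · exact Or.inr h
  · rintro ((h | h) | h)
    · exact Or.inl (Or.inr h)
    · by_cases hyu : y = u
      · exact Or.inl (Or.inl hyu)
      · exact Or.inr (Or.inl ⟨h, hyu⟩)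
    · exact Or.inr (Or.inr h)

lemma liv_insert {C : Set (Fin n)} {u : Fin n} (hu : u ∈ bd G C) :
    liv G (insert u C) ⊆ (liv G C \ {u}) ∪ outS G C u := by
  rintro y ⟨hybd, hyout⟩
  rw [bd_insert hu] at hybd
  rcases hybd with ⟨hybd, hyu⟩ | hyout'
  · left
    refine ⟨⟨hybd, ?_⟩, hyu⟩
    obtain ⟨z, hz⟩ := hyout
    refine ⟨z, hz.1, fun hzcov => hz.2 ?_⟩
    rw [cov_insert hu]
    exact Or.inl hzcov
  · right; exact hyout'

lemma bd_insert_ncard {C : Set (Fin n)} {u : Fin n} (hu : u ∈ bd G C) :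
    (bd G (insert u C)).ncard + 1 = (bd G C).ncard + (outS G C u).ncard := by
  rw [bd_insert hu]
  have hdisj : Disjoint (bd G C \ {u}) (outS G C u) :=
    Disjoint.symm (outS_disj_cov.mono_right (Set.diff_subset.trans bd_subset_cov))
  rw [Set.ncard_union_eq hdisj (Set.toFinite _) (Set.toFinite _)]
  have := Set.ncard_diff_singleton_add_one hu (Set.toFinite _)
  omega

lemma spc_insert_le {C : Set (Fin n)} {u : Fin n} (hu : u ∈ bd G C) :
    (spc G ∩ cov G (insert u C)).ncard ≤
      (spc G ∩ cov G C).ncard + (spc G ∩ outS G C u).ncard := by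
  rw [cov_insert hu, Set.inter_union_distrib_left]
  exact Set.ncard_union_le _ _

lemma liv_insert_ncard {C : Set (Fin n)} {u : Fin n} (hu : u ∈ liv G C) :
    (liv G (insert u C)).ncard + 1 ≤ (liv G C).ncard + (outS G C u).ncard := by
  have h1 : (liv G (insert u C)).ncard ≤ (liv G C \ {u}).ncard + (outS G C u).ncard :=
    le_trans (Set.ncard_le_ncard (liv_insert hu.1) (Set.toFinite _))
      (Set.ncard_union_le _ _)
  have h2 := Set.ncard_diff_singleton_add_one hu (Set.toFinite _)
  omega

lemma spc_inter_le (A : Set (Fin n)) : (spc G ∩ A).ncard ≤ A.ncard :=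
  Set.ncard_le_ncard Set.inter_subset_right (Set.toFinite _)

/-- Case 1 (also generic): inserting a live boundary vertex with `k` outside
neighbours changes `phi` by at least `2k - 3`. -/
lemma phi_step1 {C : Set (Fin n)} {u : Fin n} (hu : u ∈ liv G C) :
    phi G C + 2 * ((outS G C u).ncard : ℤ) - 3 ≤ phi G (insert u C) := by
  have h1 := bd_insert_ncard (G := G) hu.1
  have h2 := spc_insert_le (G := G) hu.1
  have h3 := liv_insert_ncard hu
  have h4 := spc_inter_le (G := G) (outS G C u)
  rw [phi, phi]
  push_cast
  omega

/-- Case 2b: chain step through a non-special vertex. -/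
lemma phi_step2b {C : Set (Fin n)} {u w : Fin n} (hu : u ∈ liv G C)
    (hout : outS G C u = {w}) (hw : w ∉ spc G) :
    phi G C ≤ phi G (insert u C) := by
  have h1 := bd_insert_ncard (G := G) hu.1
  have h3 := liv_insert_ncard hu
  have h2 := spc_insert_le (G := G) hu.1
  have hsw : spc G ∩ outS G C u = ∅ := by
    rw [hout]
    ext y
    simp only [Set.mem_inter_iff, Set.mem_singleton_iff, Set.mem_empty_iff_false, iff_false,
      not_and]
    rintro hy rfl
    exact hw hy
  rw [hsw, Set.ncard_empty] at h2
  rw [hout, Set.ncard_singleton] at h1 h3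
  rw [phi, phi]
  push_cast
  omega

/-- Case 2c-i: chain step into a dead special vertex. -/
lemma phi_step2ci {C : Set (Fin n)} {u w : Fin n} (hu : u ∈ liv G C)
    (hout : outS G C u = {w}) (hdead : G.neighborSet w ⊆ cov G C) :
    phi G C ≤ phi G (insert u C) := by
  have h1 := bd_insert_ncard (G := G) hu.1
  have h2 := spc_insert_le (G := G) hu.1
  have h4 := spc_inter_le (G := G) (outS G C u)
  have hliv : liv G (insert u C) ⊆ liv G C \ {u} := by
    intro y hy
    have hy' := liv_insert hu.1 hy
    rcases hy' with h | h
    · exact h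
    · exfalso
      rw [hout, Set.mem_singleton_iff] at h
      subst h
      obtain ⟨z, hz⟩ := hy.2
      rw [outS, cov_insert hu.1, hout] at hz
      exact hz.2 (Or.inl (hdead hz.1))
  have h3 : (liv G (insert u C)).ncard + 1 ≤ (liv G C).ncard := by
    have := Set.ncard_le_ncard hliv (Set.toFinite _)
    have h2' := Set.ncard_diff_singleton_add_one hu (Set.toFinite _)
    omega
  rw [hout] at h2
  rw [hout, Set.ncard_singleton] at h1 h4
  rw [phi, phi]
  push_cast
  omega

/-- Case 2c-ii: chain step through a special vertex with a dying witness `z`. -/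
lemma phi_step2cii {C : Set (Fin n)} {u w z : Fin n} (hu : u ∈ liv G C)
    (hout : outS G C u = {w}) (hz : z ∈ liv G C) (hzu : z ≠ u)
    (houtz : outS G C z = {w}) :
    phi G C ≤ phi G (insert u C) := by
  have h1 := bd_insert_ncard (G := G) hu.1
  have h2 := spc_insert_le (G := G) hu.1
  have h4 := spc_inter_le (G := G) (outS G C u)
  have hliv : liv G (insert u C) ⊆ ((liv G C \ {u}) \ {z}) ∪ {w} := by
    intro y hy
    have hy' := liv_insert hu.1 hy
    rcases hy' with h | h
    · left
      refine ⟨h, ?_⟩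
      rintro rfl
      obtain ⟨o, ho⟩ := hy.2
      rw [outS, cov_insert hu.1, hout] at ho
      have : o ∈ outS G C y := ⟨ho.1, fun hc => ho.2 (Or.inl hc)⟩
      rw [houtz, Set.mem_singleton_iff] at this
      exact ho.2 (Or.inr (Set.mem_singleton_iff.2 this))
    · right
      rw [hout] at h
      exact h
  have h3 : (liv G (insert u C)).ncard + 1 ≤ (liv G C).ncard := by
    have hle := Set.ncard_le_ncard hliv (Set.toFinite _)
    have hle2 := Set.ncard_union_le ((liv G C \ {u}) \ {z}) {w}
    have hz' : z ∈ liv G C \ {u} := ⟨hz, hzu⟩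
    have e1 := Set.ncard_diff_singleton_add_one hz' (Set.toFinite _)
    have e2 := Set.ncard_diff_singleton_add_one hu (Set.toFinite _)
    have := Set.ncard_singleton (α := Fin n) w
    omega
  rw [hout] at h2
  rw [hout, Set.ncard_singleton] at h1 h4
  rw [phi, phi]
  push_cast
  omega

/-- Case 2a: double step through `u` and `w`. -/
lemma phi_step2a {C : Set (Fin n)} {u w : Fin n} (hu : u ∈ liv G C)
    (hout : outS G C u = {w}) (hkw : 2 ≤ (G.neighborSet w \ cov G C).ncard) :
    phi G C ≤ phi G (insert w (insert u C)) := by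
  have hwbd : w ∈ bd G (insert u C) := by
    rw [bd_insert hu.1, hout]
    exact Or.inr rfl
  have houtw : outS G (insert u C) w = G.neighborSet w \ cov G C := by
    rw [outS, cov_insert hu.1, hout]
    ext y
    simp only [Set.mem_diff, Set.mem_union, Set.mem_singleton_iff]
    constructor
    · rintro ⟨h1, h2⟩
      exact ⟨h1, fun hc => h2 (Or.inl hc)⟩
    · rintro ⟨h1, h2⟩
      refine ⟨h1, ?_⟩
      rintro (hc | rfl)
      · exact h2 hc
      · exact G.irrefl h1
  have hwlive : w ∈ liv G (insert u C) := by
    refine ⟨hwbd, ?_⟩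
    rw [houtw]
    rcases Set.nonempty_of_ncard_ne_zero (s := G.neighborSet w \ cov G C) (by omega) with ⟨y, hy⟩
    exact ⟨y, hy⟩
  -- step from C to C'
  have h1 := bd_insert_ncard (G := G) hu.1
  have h2 := spc_insert_le (G := G) hu.1
  have h3 := liv_insert_ncard hu
  have h4 := spc_inter_le (G := G) (outS G C u)
  -- step from C' to C''
  have g1 := bd_insert_ncard (G := G) hwbd
  have g2 := spc_insert_le (G := G) hwbd
  have g3 := liv_insert_ncard hwlive
  have g4 := spc_inter_le (G := G) (outS G (insert u C) w)
  rw [houtw] at g1 g2 g3 g4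
  rw [hout] at h2
  rw [hout, Set.ncard_singleton] at h1 h3 h4
  rw [phi, phi]
  push_cast
  omega

lemma crossing {A : Set (Fin n)} {a p : Fin n} (hp : p ∉ A)
    (hreach : Relation.ReflTransGen G.Adj a p) (ha : a ∈ A) :
    ∃ x ∈ A, ∃ y, y ∉ A ∧ G.Adj x y := by
  induction hreach using Relation.ReflTransGen.head_induction_on with
  | refl => exact absurd ha hp
  | head hadj _ ih =>
    rename_i c b _
    by_cases hb : b ∈ A
    · exact ih hb
    · exact ⟨c, ha, b, hb, hadj⟩

lemma exists_live {C : Set (Fin n)} (hconn : G.Connected) (hC : conn G C)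
    (hne : cov G C ≠ Set.univ) : ∃ u ∈ liv G C, True := by
  obtain ⟨p, hp⟩ : ∃ p, p ∉ cov G C := by
    by_contra hcon
    push_neg at hcon
    exact hne (Set.eq_univ_of_forall hcon)
  obtain ⟨a, ha⟩ := hC.1
  have hreach : Relation.ReflTransGen G.Adj a p :=
    (SimpleGraph.reachable_iff_reflTransGen (G := G) (u := a) (v := p)).1
      (hconn.preconnected a p)
  obtain ⟨x, hx, y, hy, hadj⟩ := crossing hp hreach (subset_cov ha)
  rcases hx with hxC | hxbd
  · exact absurd (bd_subset_cov ⟨fun h => hy (subset_cov h), x, hxC, hadj⟩) hy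
  · exact ⟨x, ⟨hxbd, y, hadj, hy⟩, trivial⟩

/-- The key step: from any unfinished connected state, `phi` can be preserved
while strictly growing the set. -/
lemma step_lemma {C : Set (Fin n)} (hconn : G.Connected) (hC : conn G C)
    (hne : cov G C ≠ Set.univ) :
    ∃ C', conn G C' ∧ C ⊆ C' ∧ C ≠ C' ∧ phi G C ≤ phi G C' := by
  classical
  by_cases hcase1 : ∃ u ∈ bd G C, 2 ≤ (outS G C u).ncard
  · obtain ⟨u, hu, hk⟩ := hcase1
    have hulive : u ∈ liv G C :=
      ⟨hu, Set.nonempty_of_ncard_ne_zero (by omega)⟩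
    refine ⟨insert u C, conn_insert hC hu, Set.subset_insert _ _, ?_, ?_⟩
    · intro h
      exact hu.1 (h ▸ Set.mem_insert _ _)
    · have := phi_step1 (G := G) hulive
      have hk' : (2 : ℤ) ≤ ((outS G C u).ncard : ℤ) := by exact_mod_cast hk
      linarith
  · push_neg at hcase1
    obtain ⟨u, hu, -⟩ := exists_live hconn hC hne
    have hout1 : (outS G C u).ncard = 1 := by
      have hle := hcase1 u hu.1
      have : (outS G C u).ncard ≠ 0 := by
        intro h
        rw [Set.ncard_eq_zero (Set.toFinite _)] at h
        exact Set.not_nonempty_empty (h ▸ hu.2)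
      omega
    obtain ⟨w, hw⟩ := (Set.ncard_eq_one).1 hout1
    have hnotinC : u ∉ C := hu.1.1
    have hssub : C ≠ insert u C := fun h => hnotinC (h ▸ Set.mem_insert _ _)
    by_cases hkw : 2 ≤ (G.neighborSet w \ cov G C).ncard
    · -- case 2a
      have hwcov : w ∉ cov G C := by
        have : w ∈ outS G C u := hw ▸ rfl
        exact this.2
      refine ⟨insert w (insert u C), ?_, ?_, ?_, phi_step2a hu hw hkw⟩
      · refine conn_insert (conn_insert hC hu.1) ?_
        rw [bd_insert hu.1, hw]
        exact Or.inr rfl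
      · exact (Set.subset_insert _ _).trans (Set.subset_insert _ _)
      · intro h
        exact hnotinC (h ▸ (Set.mem_insert_of_mem w (Set.mem_insert u C)))
    · by_cases hwspc : w ∈ spc G
      · by_cases hdead : G.neighborSet w ⊆ cov G C
        · -- case 2c-i
          exact ⟨insert u C, conn_insert hC hu.1, Set.subset_insert _ _, hssub,
            phi_step2ci hu hw hdead⟩
        · -- case 2c-ii
          have hkw1 : (G.neighborSet w \ cov G C).ncard = 1 := by
            have : (G.neighborSet w \ cov G C).ncard ≠ 0 := by
              intro h
              rw [Set.ncard_eq_zero (Set.toFinite _)] at h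
              refine hdead (fun y hy => by
                by_contra hyc
                have : y ∈ G.neighborSet w \ cov G C := ⟨hy, hyc⟩
                rw [h] at this
                exact this)
            omega
          -- w has at least two neighbours in cov since deg w ≠ 2
          have hwu : G.Adj u w := by
            have : w ∈ outS G C u := hw ▸ rfl
            exact this.1
          have hwcov : w ∉ cov G C := by
            have : w ∈ outS G C u := hw ▸ rfl
            exact this.2
          have hsplit : (G.neighborSet w).ncard =
              (G.neighborSet w ∩ cov G C).ncard + (G.neighborSet w \ cov G C).ncard := by
            rw [← Set.ncard_union_eq (Set.disjoint_left.2 fun z hz1 hz2 => hz2.2 hz1.2)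
              (Set.toFinite _) (Set.toFinite _)]
            congr 1
            rw [Set.inter_union_diff]
          have hucovw : u ∈ G.neighborSet w ∩ cov G C :=
            ⟨hwu.symm, bd_subset_cov hu.1⟩
          have hz : ∃ z ∈ G.neighborSet w ∩ cov G C, z ≠ u := by
            by_contra hcon
            push_neg at hcon
            have heq : G.neighborSet w ∩ cov G C = {u} := by
              apply Set.eq_singleton_iff_unique_mem.2
              exact ⟨hucovw, hcon⟩
            rw [heq, Set.ncard_singleton, hkw1] at hsplit
            exact (show (G.neighborSet w).ncard ≠ 2 from hwspc) (by omega)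
          obtain ⟨z, hzmem, hzu⟩ := hz
          have hzbd : z ∈ bd G C := by
            rcases hzmem.2 with hzC | hzbd
            · exact absurd (bd_subset_cov (⟨fun hwC => hwcov (subset_cov hwC), z, hzC,
                hzmem.1.symm⟩ : w ∈ bd G C)) hwcov
            · exact hzbd
          have hwoutz : w ∈ outS G C z := ⟨hzmem.1.symm, hwcov⟩
          have houtz : outS G C z = {w} := by
            have hle := hcase1 z hzbd
            have hne' : (outS G C z).Nonempty := ⟨w, hwoutz⟩
            have hcz : (outS G C z).ncard = 1 := by
              have : (outS G C z).ncard ≠ 0 := by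
                intro h
                rw [Set.ncard_eq_zero (Set.toFinite _)] at h
                exact Set.not_nonempty_empty (h ▸ hne')
              omega
            obtain ⟨w', hw'⟩ := Set.ncard_eq_one.1 hcz
            rw [hw']
            rw [hw'] at hwoutz
            rw [Set.mem_singleton_iff] at hwoutz
            rw [hwoutz]
          have hzliv : z ∈ liv G C := ⟨hzbd, w, hwoutz⟩
          exact ⟨insert u C, conn_insert hC hu.1, Set.subset_insert _ _, hssub,
            phi_step2cii hu hw hzliv hzu houtz⟩
      · -- case 2b
        exact ⟨insert u C, conn_insert hC hu.1, Set.subset_insert _ _, hssub,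
          phi_step2b hu hw hwspc⟩

/-- The process: grow a connected set preserving `phi ≥ 6` until it covers
everything. -/
lemma process (hconn : G.Connected) :
    ∀ d (C : Set (Fin n)), conn G C → 6 ≤ phi G C → n ≤ C.ncard + d →
      ∃ C', conn G C' ∧ cov G C' = Set.univ ∧ 6 ≤ phi G C' := by
  intro d
  induction d with
  | zero =>
    intro C hC hphi hcard
    by_cases hcov : cov G C = Set.univ
    · exact ⟨C, hC, hcov, hphi⟩
    · exfalso
      obtain ⟨C', hC', hsub, hne, -⟩ := step_lemma hconn hC hcov
      have h1 : C.ncard < C'.ncard :=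
        Set.ncard_lt_ncard (Set.ssubset_iff_subset_ne.2 ⟨hsub, hne⟩) (Set.toFinite _)
      have h2 : C'.ncard ≤ n := by
        have := Set.ncard_le_ncard (Set.subset_univ C') (Set.toFinite _)
        rwa [Set.ncard_univ, Nat.card_eq_fintype_card, Fintype.card_fin] at this
      omega
  | succ d ih =>
    intro C hC hphi hcard
    by_cases hcov : cov G C = Set.univ
    · exact ⟨C, hC, hcov, hphi⟩
    · obtain ⟨C', hC', hsub, hne, hphi'⟩ := step_lemma hconn hC hcov
      have h1 : C.ncard < C'.ncard :=
        Set.ncard_lt_ncard (Set.ssubset_iff_subset_ne.2 ⟨hsub, hne⟩) (Set.toFinite _)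
      exact ih C' hC' (le_trans hphi hphi') (by omega)

/-- A vertex strictly further than `a` has a neighbour one step closer. -/
lemma dist_down (hconn : G.Connected) {a v : Fin n} {r : ℕ} (h : G.dist a v = r + 1) :
    ∃ u, G.Adj v u ∧ G.dist a u = r := by
  have hvd : G.dist v a = r + 1 := by rw [SimpleGraph.dist_comm]; exact h
  obtain ⟨w, hw⟩ := (hconn.preconnected v a).exists_walk_length_eq_dist
  rw [hvd] at hw
  cases w with
  | nil =>
    exfalso
    rw [SimpleGraph.dist_self] at hvd
    omega
  | cons hadj q =>
    rename_i u
    refine ⟨u, hadj, ?_⟩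
    have hlen : q.length = r := by
      simpa using hw
    have h1 : G.dist a u ≤ r := by
      have := SimpleGraph.dist_le q.reverse
      rw [SimpleGraph.Walk.length_reverse] at this
      omega
    have h2 : r ≤ G.dist a u := by
      by_contra hcon
      push_neg at hcon
      obtain ⟨w2, hw2⟩ := (hconn.preconnected a u).exists_walk_length_eq_dist
      have := SimpleGraph.dist_le (w2.concat hadj.symm)
      rw [SimpleGraph.Walk.length_concat] at this
      omega
    omega

/-- In a connected graph with max degree ≤ 2 the distance spheres from a
degree-≤1 vertex are subsingletons. -/
lemma sphere_subsingleton (hconn : G.Connected) {a : Fin n}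
    (hdega : (G.neighborSet a).ncard ≤ 1) (hmax : ∀ v, (G.neighborSet v).ncard ≤ 2) :
    ∀ r, ∀ x y, G.dist a x = r → G.dist a y = r → x = y := by
  intro r
  induction r using Nat.strong_induction_on with
  | _ r ih =>
    match r with
    | 0 =>
      intro x y hx hy
      have hx' : a = x := (hconn.dist_eq_zero_iff).1 hx
      have hy' : a = y := (hconn.dist_eq_zero_iff).1 hy
      rw [← hx', ← hy']
    | (r + 1) =>
      intro x y hx hy
      obtain ⟨ux, hadjx, hux⟩ := dist_down hconn hx
      obtain ⟨uy, hadjy, huy⟩ := dist_down hconn hy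
      have huu : ux = uy := ih r (by omega) _ _ hux huy
      subst huu
      by_contra hxy
      match r with
      | 0 =>
        have hua : ux = a := ((hconn.dist_eq_zero_iff).1 hux).symm
        subst hua
        have hsub : ({x, y} : Set (Fin n)) ⊆ G.neighborSet ux :=
          fun z hz => by
            rcases hz with rfl | hz
            · exact hadjx.symm
            · rw [Set.mem_singleton_iff] at hz
              subst hz
              exact hadjy.symm
        have := Set.ncard_le_ncard hsub (Set.toFinite _)
        rw [Set.ncard_pair hxy] at this
        omega
      | (r' + 1) =>
        obtain ⟨w, hadjw, hw⟩ := dist_down hconn hux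
        have hwx : w ≠ x := fun h => by rw [h, hx] at hw; omega
        have hwy : w ≠ y := fun h => by rw [h, hy] at hw; omega
        have hsub : ({w, x, y} : Set (Fin n)) ⊆ G.neighborSet ux := by
          intro z hz
          rcases hz with rfl | rfl | hz
          · exact hadjw
          · exact hadjx.symm
          · rw [Set.mem_singleton_iff] at hz
            subst hz
            exact hadjy.symm
        have h3 : ({w, x, y} : Set (Fin n)).ncard = 3 :=
          Set.ncard_eq_three.2 ⟨w, x, y, hwx, hwy, hxy, rfl⟩
        have := Set.ncard_le_ncard hsub (Set.toFinite _)
        rw [h3] at this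
        have := hmax ux
        omega

/-- No vertices exist beyond a degree-≤1 vertex. -/
lemma sphere_stops (hconn : G.Connected) {a b : Fin n}
    (hdega : (G.neighborSet a).ncard ≤ 1) (hmax : ∀ v, (G.neighborSet v).ncard ≤ 2)
    (hdegb : (G.neighborSet b).ncard ≤ 1) (hab : b ≠ a) :
    ∀ j x, G.dist a x ≠ G.dist a b + 1 + j := by
  have hrb : 1 ≤ G.dist a b := by
    by_contra hcon
    push_neg at hcon
    interval_cases h : G.dist a b
    · exact hab ((hconn.dist_eq_zero_iff).1 h).symm
  intro j
  induction j with
  | zero =>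
    intro x hx
    rw [Nat.add_zero] at hx
    obtain ⟨u, hadj, hu⟩ := dist_down hconn hx
    have hub : u = b := sphere_subsingleton hconn hdega hmax _ _ _ hu rfl
    subst hub
    obtain hb' : G.dist a u = (G.dist a u - 1) + 1 := by omega
    obtain ⟨w, hadjw, hw⟩ := dist_down hconn hb'
    have hwx : w ≠ x := by
      intro h
      rw [h, hx] at hw
      omega
    have hsub : ({w, x} : Set (Fin n)) ⊆ G.neighborSet u := by
      intro z hz
      rcases hz with rfl | hz
      · exact hadjw
      · rw [Set.mem_singleton_iff] at hz
        subst hz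
        exact hadj.symm
    have := Set.ncard_le_ncard hsub (Set.toFinite _)
    rw [Set.ncard_pair hwx] at this
    omega
  | succ j ihj =>
    intro x hx
    obtain ⟨u, hadj, hu⟩ := dist_down hconn (by rw [hx]; ring_nf : G.dist a x = (G.dist a b + 1 + j) + 1)
    exact ihj u hu

lemma exists_deg3 (hconn : G.Connected) (ht3 : 3 ≤ (spc G).ncard) :
    ∃ v, 3 ≤ (G.neighborSet v).ncard := by
  by_contra hcon
  push_neg at hcon
  have hmax : ∀ v, (G.neighborSet v).ncard ≤ 2 := fun v => by have := hcon v; omega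
  obtain ⟨T, hTs, hT3⟩ := Set.exists_subset_card_eq ht3
  obtain ⟨a, b, c, hab, hac, hbc, rfl⟩ := Set.ncard_eq_three.1 hT3
  have hdeg : ∀ z ∈ ({a, b, c} : Set (Fin n)), (G.neighborSet z).ncard ≤ 1 := by
    intro z hz
    have hzspc : z ∈ spc G := hTs hz
    have h1 : (G.neighborSet z).ncard ≠ 2 := hzspc
    have := hmax z
    omega
  have hda := hdeg a (by simp)
  have hdb := hdeg b (by simp)
  have hdc := hdeg c (by simp)
  -- b and c both "stop" the spheres; they must be at the same distance, hence equal
  have hstop_b := sphere_stops hconn hda hmax hdb (Ne.symm hab)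
  have hstop_c := sphere_stops hconn hda hmax hdc (Ne.symm hac)
  have hrbc : G.dist a b = G.dist a c := by
    by_contra hne
    rcases Nat.lt_or_ge (G.dist a b) (G.dist a c) with h | h
    · exact hstop_b (G.dist a c - G.dist a b - 1) c (by omega)
    · have : G.dist a c < G.dist a b := by omega
      exact hstop_c (G.dist a b - G.dist a c - 1) b (by omega)
  exact hbc (sphere_subsingleton hconn hda hmax _ _ _ hrbc rfl)

lemma bd_singleton (v : Fin n) : bd G {v} = G.neighborSet v := by
  ext y
  constructor
  · rintro ⟨hy, c, rfl, hadj⟩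
    exact hadj
  · intro hy
    exact ⟨fun h => G.irrefl (Set.mem_singleton_iff.1 h ▸ hy), v, rfl, hy⟩

lemma conn_singleton (v : Fin n) : conn G {v} := by
  refine ⟨⟨v, rfl⟩, ?_⟩
  rintro a rfl b rfl
  rfl

/-- a one-element set in `s ⊆ {p, q}` contains exactly one of `p, q` -/
lemma one_of_pair {s : Set (Fin n)} {p q : Fin n} (hsub : s ⊆ {p, q}) (hpq : p ≠ q)
    (hcard : s.ncard = 1) : (p ∈ s ∧ q ∉ s) ∨ (p ∉ s ∧ q ∈ s) := by
  obtain ⟨x, rfl⟩ := Set.ncard_eq_one.1 hcard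
  rcases hsub rfl with rfl | hx
  · exact Or.inl ⟨rfl, fun h => hpq (Set.mem_singleton_iff.1 h).symm⟩
  · rw [Set.mem_singleton_iff] at hx
    subst hx
    exact Or.inr ⟨fun h => hpq (Set.mem_singleton_iff.1 h), rfl⟩

lemma start_lemma (hconn : G.Connected) (ht3 : 3 ≤ (spc G).ncard) :
    ∃ C, conn G C ∧ 6 ≤ phi G C := by
  classical
  haveI : Nonempty (Fin n) := by
    obtain ⟨x, -⟩ := Set.nonempty_of_ncard_ne_zero (s := spc G) (by omega)
    exact ⟨x⟩
  obtain ⟨v, hvmax⟩ := Finite.exists_max (fun v : Fin n => (G.neighborSet v).ncard)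
  obtain ⟨v₀, hv₀⟩ := exists_deg3 hconn ht3
  have hd3 : 3 ≤ (G.neighborSet v).ncard := le_trans hv₀ (hvmax v₀)
  set d := (G.neighborSet v).ncard with hd
  have hbd0 : bd G {v} = G.neighborSet v := bd_singleton v
  have hcov0 : cov G {v} = insert v (G.neighborSet v) := by
    rw [cov, hbd0]
    ext y
    simp [Set.mem_insert_iff]
  have hvnotin : v ∉ G.neighborSet v := fun h => G.irrefl h
  have hcovcard : (cov G {v}).ncard = d + 1 := by
    rw [hcov0, Set.ncard_insert_of_notMem hvnotin (Set.toFinite _)]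
  have hs0 : (spc G ∩ cov G {v}).ncard ≤ d + 1 :=
    le_trans (spc_inter_le _) (le_of_eq hcovcard)
  have hl0 : (liv G {v}).ncard ≤ d := by
    have : liv G {v} ⊆ G.neighborSet v := fun y hy => hbd0 ▸ hy.1
    exact Set.ncard_le_ncard this (Set.toFinite _)
  have hbd0card : (bd G {v}).ncard = d := by rw [hbd0]
  have hphi0 : (2 : ℤ) * d - 1 ≤ phi G {v} := by
    rw [phi, hbd0card]
    push_cast
    omega
  by_cases hbig : 6 ≤ phi G {v}
  · exact ⟨{v}, conn_singleton v, hbig⟩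
  · push_neg at hbig
    have hd3' : d = 3 := by
      by_contra hd4
      have : (4 : ℤ) ≤ d := by
        have := hd3
        omega
      omega
    -- phi {v} = 5 exactly and everything is special and live
    have hphi5 : (5 : ℤ) ≤ phi G {v} := by rw [hd3'] at hphi0; omega
    -- spc ∩ cov = cov and liv = bd
    rw [hd3'] at hs0 hl0
    have hs4 : (spc G ∩ cov G {v}).ncard = 4 ∧ (liv G {v}).ncard = 3 := by
      have h1 : phi G {v} = 12 - ((spc G ∩ cov G {v}).ncard : ℤ)
          - ((liv G {v}).ncard : ℤ) := by
        rw [phi, hbd0card, hd3']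
        push_cast
        ring
      constructor <;> omega
    have hcoveq : spc G ∩ cov G {v} = cov G {v} := by
      apply Set.eq_of_subset_of_ncard_le Set.inter_subset_right _ (Set.toFinite _)
      omega
    have hliveq : liv G {v} = G.neighborSet v := by
      apply Set.eq_of_subset_of_ncard_le (fun y hy => hbd0 ▸ hy.1) _ (Set.toFinite _)
      omega
    -- there is a neighbour with two outside neighbours
    have hmain : ∃ u ∈ G.neighborSet v, 2 ≤ (outS G {v} u).ncard := by
      by_contra hall
      push_neg at hall
      have hA : ∀ u ∈ G.neighborSet v, ((G.neighborSet u ∩ cov G {v}) \ {v}).ncard = 1 := by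
        intro u hu
        have hulive : u ∈ liv G {v} := hliveq ▸ hu
        have hout1 : (outS G {v} u).ncard = 1 := by
          have h1 := hall u hu
          have h2 : (outS G {v} u).ncard ≠ 0 := by
            intro h
            rw [Set.ncard_eq_zero (Set.toFinite _)] at h
            exact Set.not_nonempty_empty (h ▸ hulive.2)
          omega
        have hsplit : (G.neighborSet u).ncard =
            (G.neighborSet u ∩ cov G {v}).ncard + (outS G {v} u).ncard := by
          rw [← Set.ncard_union_eq (Set.disjoint_left.2 fun z hz1 hz2 => hz2.2 hz1.2)
            (Set.toFinite _) (Set.toFinite _)]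
          congr 1
          rw [outS, Set.inter_union_diff]
        have hadjvu : G.Adj v u := hu
        have hvmem : v ∈ G.neighborSet u ∩ cov G {v} :=
          ⟨hadjvu.symm, subset_cov rfl⟩
        have hspc : u ∈ spc G := (hcoveq.symm ▸ (bd_subset_cov (hbd0 ▸ hu) : u ∈ cov G {v})).1
        have hune2 : (G.neighborSet u).ncard ≠ 2 := hspc
        have humax : (G.neighborSet u).ncard ≤ 3 := hd3' ▸ hvmax u
        have hdiff := Set.ncard_diff_singleton_add_one hvmem (Set.toFinite _)
        omega
      obtain ⟨a, b, c, hab, hac, hbc, hN⟩ := Set.ncard_eq_three.1 (hd3' ▸ hd.symm)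
      have hAsub : ∀ u p q : Fin n, G.neighborSet v = {u, p, q} →
          ((G.neighborSet u ∩ cov G {v}) \ {v}) ⊆ {p, q} := by
        intro u p q hupq z hz
        have hzcov : z ∈ cov G {v} := hz.1.2
        have hzv : z ≠ v := hz.2
        have hzu : z ≠ u := fun h => G.irrefl (h ▸ hz.1.1)
        have hzN : z ∈ G.neighborSet v := by
          rw [hcov0] at hzcov
          rcases hzcov with h | h
          · exact absurd h hzv
          · exact h
        rw [hupq] at hzN
        rcases hzN with h | h
        · exact absurd h hzu
        · exact h
      have hmem_iff : ∀ u z : Fin n, z ∈ G.neighborSet v → z ≠ v →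
          (z ∈ (G.neighborSet u ∩ cov G {v}) \ {v} ↔ G.Adj u z) := by
        intro u z hzN hzv
        constructor
        · intro h
          exact h.1.1
        · intro h
          exact ⟨⟨h, by rw [hcov0]; exact Or.inr hzN⟩, hzv⟩
      have haN : a ∈ G.neighborSet v := by rw [hN]; exact Or.inl rfl
      have hbN : b ∈ G.neighborSet v := by rw [hN]; exact Or.inr (Or.inl rfl)
      have hcN : c ∈ G.neighborSet v := by rw [hN]; exact Or.inr (Or.inr rfl)
      have hav : a ≠ v := (show G.Adj v a from haN).ne'
      have hbv : b ≠ v := (show G.Adj v b from hbN).ne'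
      have hcv : c ≠ v := (show G.Adj v c from hcN).ne'
      have hNb : G.neighborSet v = {b, a, c} := by
        rw [hN]; ext z; simp only [Set.mem_insert_iff, Set.mem_singleton_iff]; tauto
      have hNc : G.neighborSet v = {c, a, b} := by
        rw [hN]; ext z; simp only [Set.mem_insert_iff, Set.mem_singleton_iff]; tauto
      have xA := one_of_pair (hAsub a b c hN) hbc (hA a haN)
      have xB := one_of_pair (hAsub b a c hNb) hac (hA b hbN)
      have xC := one_of_pair (hAsub c a b hNc) hab (hA c hcN)
      rw [hmem_iff a b hbN hbv, hmem_iff a c hcN hcv] at xA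
      rw [hmem_iff b a haN hav, hmem_iff b c hcN hcv] at xB
      rw [hmem_iff c a haN hav, hmem_iff c b hbN hbv] at xC
      have s1 : G.Adj a b ↔ G.Adj b a := ⟨SimpleGraph.Adj.symm, SimpleGraph.Adj.symm⟩
      have s2 : G.Adj a c ↔ G.Adj c a := ⟨SimpleGraph.Adj.symm, SimpleGraph.Adj.symm⟩
      have s3 : G.Adj b c ↔ G.Adj c b := ⟨SimpleGraph.Adj.symm, SimpleGraph.Adj.symm⟩
      tauto
    obtain ⟨u, hu, hk⟩ := hmain
    have hulive : u ∈ liv G {v} := hliveq ▸ hu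
    refine ⟨insert u {v}, conn_insert (conn_singleton v) (hbd0 ▸ hu), ?_⟩
    have := phi_step1 (G := G) hulive
    have hk' : (2 : ℤ) ≤ ((outS G {v} u).ncard : ℤ) := by exact_mod_cast hk
    linarith

/-- extract a chain list from reflexive-transitive closure -/
lemma rtg_chain {α : Type*} {r : α → α → Prop} {a b : α} (h : Relation.ReflTransGen r a b) :
    ∃ L : List α, L ≠ [] ∧ L.head? = some a ∧ L.getLast? = some b ∧ L.Chain' r ∧
      ∀ v ∈ L, v = a ∨ ∃ u, r u v := by
  induction h using Relation.ReflTransGen.head_induction_on with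
  | refl => exact ⟨[b], by simp, by simp, by simp, List.isChain_singleton _, by simp⟩
  | @head p q hstep htail ih =>
    obtain ⟨L, hLne, hLhd, hLlast, hLch, hLmem⟩ := ih
    refine ⟨p :: L, by simp, by simp, ?_, ?_, ?_⟩
    · rw [← hLlast]
      cases L with
      | nil => exact absurd rfl hLne
      | cons z L' => simp
    · show List.IsChain _ _
      rw [List.isChain_cons]
      refine ⟨?_, hLch⟩
      intro y hy
      rw [hLhd] at hy
      simp only [Option.mem_def, Option.some.injEq] at hy
      subst hy
      exact hstep
    · intro z hz
      rcases List.mem_cons.1 hz with rfl | hz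
      · exact Or.inl rfl
      · rcases hLmem z hz with rfl | hu
        · exact Or.inr ⟨_, hstep⟩
        · exact Or.inr hu

/-- extract a chain list within a connected set -/
lemma conn_chain {C : Set (Fin n)} (hC : conn G C) {a b : Fin n} (ha : a ∈ C) (hb : b ∈ C) :
    ∃ L : List (Fin n), L ≠ [] ∧ L.head? = some a ∧ L.getLast? = some b ∧
      L.Chain' G.Adj ∧ ∀ v ∈ L, v ∈ C := by
  obtain ⟨L, hLne, hLhd, hLlast, hLch, hLmem⟩ := rtg_chain (hC.2 a ha b hb)
  refine ⟨L, hLne, hLhd, hLlast, List.IsChain.imp (fun p q hpq => hpq.1) hLch, ?_⟩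
  intro v hv
  rcases hLmem v hv with rfl | ⟨u, hu⟩
  · exact ha
  · exact hu.2.2

/-- Main combinatorial bound: if `t ≥ 3` we get `k ≥ 1` with `t + 2 ≤ 4k ≤ 4 l(G)`. -/
lemma main_bound (hconn : G.Connected) (ht3 : 3 ≤ (spc G).ncard) :
    ∃ k : ℕ, 1 ≤ k ∧ (spc G).ncard + 2 ≤ 4 * k ∧ k ≤ lG G := by
  classical
  obtain ⟨C₀, hC₀conn, hC₀phi⟩ := start_lemma hconn ht3
  obtain ⟨C, hCconn, hCcov, hCphi⟩ := process hconn n C₀ hC₀conn hC₀phi (by omega)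
  have hlivempty : liv G C = ∅ := by
    ext y
    simp only [Set.mem_empty_iff_false, iff_false]
    rintro ⟨-, z, hz⟩
    exact hz.2 (hCcov ▸ Set.mem_univ z)
  have hspccov : spc G ∩ cov G C = spc G := by
    rw [hCcov, Set.inter_univ]
  obtain ⟨b, hbdef⟩ : ∃ b, b = (bd G C).ncard := ⟨_, rfl⟩
  have hphi : 6 ≤ 4 * (b : ℤ) - ((spc G).ncard : ℤ) := by
    have heq : phi G C = 4 * (b : ℤ) - ((spc G).ncard : ℤ) - 0 := by
      rw [phi, hspccov, hlivempty, Set.ncard_empty, hbdef]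
      push_cast
      ring
    rw [heq] at hCphi
    omega
  have hb : (spc G).ncard + 6 ≤ 4 * b := by omega
  have hb3 : 3 ≤ b := by
    have := ht3
    omega
  obtain ⟨k, hkdef⟩ : ∃ k, k = b - 1 := ⟨_, rfl⟩
  refine ⟨k, by omega, by omega, ?_⟩
  have hfin : (bd G C).Finite := Set.toFinite _
  obtain ⟨L, hLn, hLnd, hLmem⟩ : ∃ L : List (Fin n), L.length = b ∧ L.Nodup ∧
      ∀ v, v ∈ L ↔ v ∈ bd G C :=
    ⟨hfin.toFinset.toList,
      by rw [Finset.length_toList, ← Set.ncard_eq_toFinset_card _ hfin, hbdef],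
      Finset.nodup_toList _,
      fun v => by rw [Finset.mem_toList, Set.Finite.mem_toFinset]⟩
  obtain ⟨u₀, -⟩ := hCconn.1
  obtain ⟨x, hx⟩ : ∃ x : ℕ → Fin n, x = fun i => L.getD i u₀ := ⟨_, rfl⟩
  have hlen : ∀ i, i ≤ k → i < L.length := by
    intro i hi
    omega
  have hxg : ∀ i (hi : i ≤ k), x i = L[i]'(hlen i hi) := by
    intro i hi
    rw [hx]
    exact List.getD_eq_getElem L u₀ (hlen i hi)
  have hxbd : ∀ i ≤ k, x i ∈ bd G C := by
    intro i hi
    refine (hLmem _).1 ?_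
    rw [hxg i hi]
    exact List.getElem_mem _
  have hinj : ∀ i ≤ k, ∀ j ≤ k, x i = x j → i = j := by
    intro i hi j hj hxy
    rw [hxg i hi, hxg j hj] at hxy
    exact hLnd.getElem_inj_iff.1 hxy
  have hpaths : ∀ j, j ≤ k → ∃ Pj : List (Fin n), Pj.Chain' G.Adj ∧
      Pj.head? = some (x j) ∧ Pj.getLast? = some (x (if j = k then 0 else j + 1)) ∧
      ∀ v ∈ Pj.dropLast, ∀ i ≤ k, v = x i → i = j := by
    intro j hj
    obtain ⟨j', hj'⟩ : ∃ j', j' = if j = k then 0 else j + 1 := ⟨_, rfl⟩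
    have hj'k : j' ≤ k := by rw [hj']; split <;> omega
    obtain ⟨hxjC, cj, hcjC, hcjadj⟩ := hxbd j hj
    obtain ⟨hxj'C, cj', hcj'C, hcj'adj⟩ := hxbd j' hj'k
    obtain ⟨M, hMne, hMhd, hMlast, hMch, hMmem⟩ := conn_chain hCconn hcjC hcj'C
    refine ⟨x j :: (M ++ [x j']), ?_, by simp, ?_, ?_⟩
    · show List.IsChain _ _
      rw [List.isChain_cons]
      constructor
      · intro y hy
        rw [List.head?_append_of_ne_nil _ hMne] at hy
        rw [hMhd] at hy
        simp only [Option.mem_def, Option.some.injEq] at hy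
        subst hy
        exact hcjadj.symm
      · rw [List.isChain_append]
        refine ⟨hMch, by simp, ?_⟩
        intro z hz y hy
        simp only [List.head?_cons, Option.mem_def, Option.some.injEq] at hy
        subst hy
        rw [hMlast] at hz
        simp only [Option.mem_def, Option.some.injEq] at hz
        subst hz
        exact hcj'adj
    · show ((x j :: M) ++ [x j']).getLast? = _
      rw [List.getLast?_concat, hj']
    · show ∀ v ∈ ((x j :: M) ++ [x j']).dropLast, _
      rw [List.dropLast_concat]
      intro v hv i hi hvx
      rcases List.mem_cons.1 hv with rfl | hv
      · exact hinj i hi j hj hvx.symm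
      · exfalso
        have hvC : v ∈ C := hMmem v hv
        have hbdv : x i ∈ bd G C := hxbd i hi
        rw [← hvx] at hbdv
        exact hbdv.1 hvC
  choose! P hP1 hP2 hP3 hP4 using hpaths
  exact le_lG (rot_witness k (by omega) x hinj P hP1 hP2 hP3 hP4)
end Stmt5

/-- If `G` is connected with `t` vertices of degree `≠ 2`, then
`l(G) ≥ (t-2)/4 + 1`. -/
theorem stmt5 (n : ℕ) (G : SimpleGraph (Fin n)) (hconn : G.Connected)
    (hedge : ∃ u v, G.Adj u v) (t : ℕ)
    (ht : t = { v : Fin n | (G.neighborSet v).ncard ≠ 2 }.ncard) :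
    ((t : ℚ) - 2) / 4 + 1 ≤ (lG G : ℚ) := by
  have htspc : t = (Stmt5.spc G).ncard := ht
  obtain ⟨u, v, huv⟩ := hedge
  by_cases ht3 : 3 ≤ t
  · obtain ⟨k, hk1, hk2, hk3⟩ := Stmt5.main_bound hconn (htspc ▸ ht3)
    rw [← htspc] at hk2
    have h1 : (t : ℚ) + 2 ≤ 4 * (k : ℚ) := by exact_mod_cast hk2
    have h2 : (k : ℚ) ≤ (lG G : ℚ) := by exact_mod_cast hk3
    linarith
  · push_neg at ht3
    have h1 : 1 ≤ lG G := Stmt5.one_le_lG huv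
    have h2 : (1 : ℚ) ≤ (lG G : ℚ) := by exact_mod_cast h1
    have h3 : (t : ℚ) ≤ 2 := by exact_mod_cast Nat.lt_succ_iff.1 ht3
    linarith
end
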